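/- arXiv:2009.13949 — 5 statements merged into one kernel-verified Lean document; each statement's English description precedes it below -/
import Mathlib

section
/- Let T be an ℓ-forest on n vertices with non-negative vertex weights ω, and let β > 0. Then there exists a set S of at most β + ℓ vertices such that every connected component of T - S has total weight at most ω(V(T))/β. -/
open SimpleGraph

section Helpers

variable {V : Type*}

/-- weight helper: finsum over a set equals finite sum. -/
lemma wsum_eq [Fintype V] (ω : V → ℝ) (s : Set V) :
    (∑ᶠ v ∈ s, ω v) = ∑ v ∈ (Set.toFinite s).toFinset, ω v :=
  finsum_mem_eq_finite_toFinset_sum ω (Set.toFinite s)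

lemma wsum_nonneg [Fintype V] (ω : V → ℝ) (hω : ∀ v, 0 ≤ ω v) (s : Set V) :
    0 ≤ ∑ᶠ v ∈ s, ω v := by
  rw [wsum_eq]; exact Finset.sum_nonneg fun v _ => hω v

lemma wsum_mono [Fintype V] (ω : V → ℝ) (hω : ∀ v, 0 ≤ ω v) {s t : Set V} (hst : s ⊆ t) :
    (∑ᶠ v ∈ s, ω v) ≤ ∑ᶠ v ∈ t, ω v := by
  rw [wsum_eq, wsum_eq]
  refine Finset.sum_le_sum_of_subset_of_nonneg ?_ (fun v _ _ => hω v)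
  intro v hv
  simp only [Set.Finite.mem_toFinset] at hv ⊢
  exact hst hv

lemma wsum_coe [Fintype V] [DecidableEq V] (ω : V → ℝ) (s : Finset V) :
    (∑ᶠ v ∈ (↑s : Set V), ω v) = ∑ v ∈ s, ω v :=
  by rw [finsum_mem_coe_finset]

/-- the weight of a component equals the weight of the image of its support. -/
lemma wimg [Fintype V] (ω : V → ℝ) {X : Set V} (G : SimpleGraph V)
    (c : (G.induce X).ConnectedComponent) :
    (∑ᶠ v ∈ c.supp, ω (v : V)) = ∑ᶠ v ∈ (Subtype.val '' c.supp), ω v := by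
  exact (finsum_mem_image (Subtype.val_injective.injOn)).symm

/-- a walk in an induced subgraph gives a walk in the big graph with controlled support. -/
lemma walk_out {X : Set V} (G : SimpleGraph V) {u w : X}
    (p : (G.induce X).Walk u w) :
    ∃ q : G.Walk (u : V) (w : V), ∀ z ∈ q.support, z ∈ X := by
  induction p with
  | nil => exact ⟨Walk.nil, by simp⟩
  | @cons a b c hab p ih =>
    obtain ⟨q, hq⟩ := ih
    refine ⟨Walk.cons (by simpa using hab) q, ?_⟩
    intro z hz
    rw [Walk.support_cons, List.mem_cons] at hz
    rcases hz with rfl | hz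
    · exact a.2
    · exact hq z hz

/-- transferring a walk in an induced subgraph to a larger induced subgraph along
its support. -/
lemma walk_transfer {X Y : Set V} (G : SimpleGraph V) {u w : X}
    (p : (G.induce X).Walk u w) (hsupp : ∀ z ∈ p.support, (z : V) ∈ Y)
    (hu : (u : V) ∈ Y) (hw : (w : V) ∈ Y) :
    (G.induce Y).Reachable ⟨u, hu⟩ ⟨w, hw⟩ := by
  induction p with
  | nil => rfl
  | @cons a b c hab p ih =>
    have hb : (b : V) ∈ Y := hsupp b (by simp)
    have h1 : (G.induce Y).Adj ⟨a, hu⟩ ⟨b, hb⟩ := by simpa using (by simpa using hab : G.Adj a b)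
    exact h1.reachable.trans (ih (fun z hz => hsupp z (by simp [hz])) hb hw)

/-- if the image of the support of a component of `G.induce X` lies in `Y`, then it is
contained in the image of the support of some component of `G.induce Y`. -/
lemma comp_contain [Fintype V] (G : SimpleGraph V) {X Y : Set V}
    (c : (G.induce X).ConnectedComponent) (hXY : Subtype.val '' c.supp ⊆ Y) :
    ∃ c' : (G.induce Y).ConnectedComponent,
      Subtype.val '' c.supp ⊆ Subtype.val '' c'.supp := by
  classical
  induction c using SimpleGraph.ConnectedComponent.ind with
  | _ u =>
  have husupp : u ∈ ((G.induce X).connectedComponentMk u).supp := by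
    simp [ConnectedComponent.mem_supp_iff]
  have hu : (u : V) ∈ Y := hXY ⟨u, husupp, rfl⟩
  refine ⟨(G.induce Y).connectedComponentMk ⟨u, hu⟩, ?_⟩
  rintro _ ⟨w, hw, rfl⟩
  rw [ConnectedComponent.mem_supp_iff, ConnectedComponent.eq] at hw
  obtain ⟨p⟩ := hw
  have hmem : ∀ z ∈ p.support, (z : V) ∈ Y := by
    intro z hz
    refine hXY ⟨z, ?_, rfl⟩
    rw [ConnectedComponent.mem_supp_iff, ConnectedComponent.eq]
    exact ⟨(p.dropUntil z hz)⟩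
  have hwY : (w : V) ∈ Y := hmem w p.start_mem_support
  have := walk_transfer G p hmem hwY hu
  exact ⟨⟨w, hwY⟩, by rwa [ConnectedComponent.mem_supp_iff, ConnectedComponent.eq], rfl⟩

lemma min_pair [Fintype V] [DecidableEq V] {G : SimpleGraph V} (hG : G.IsAcyclic)
    (ω : V → ℝ) (hω : ∀ v, 0 ≤ ω v) {t : ℝ} (ht : 0 < t) (U : Finset V)
    (hheavy : ∃ c : (G.induce (↑U : Set V)).ConnectedComponent,
      t < ∑ᶠ v ∈ c.supp, ω (v : V)) :
    ∃ (A : Finset V) (v : V), v ∈ A ∧ A ⊆ U ∧ t < ∑ x ∈ A, ω x ∧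
      (∀ a ∈ A, ∀ b ∈ U, b ∉ A → G.Adj a b → a = v) ∧
      ∀ d : (G.induce ((↑A : Set V) \ {v})).ConnectedComponent,
        (∑ᶠ x ∈ d.supp, ω (x : V)) ≤ t := by
  classical
  set P : ℕ → Prop := fun n => ∃ A : Finset V, ∃ v, A.card = n ∧ v ∈ A ∧ A ⊆ U ∧
    (t < ∑ x ∈ A, ω x) ∧ ∀ a ∈ A, ∀ b ∈ U, b ∉ A → G.Adj a b → a = v with hPdef
  -- initial good pair from a heavy component
  have hP : ∃ n, P n := by
    obtain ⟨c₀, hc₀⟩ := hheavy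
    obtain ⟨u, hu⟩ := c₀.exists_rep
    set C : Set V := Subtype.val '' c₀.supp with hC
    have hCU : C ⊆ (↑U : Set V) := by rintro _ ⟨a, _, rfl⟩; exact a.2
    have hCfin : (↑(Set.toFinite C).toFinset : Set V) = C := Set.Finite.coe_toFinset _
    refine ⟨(Set.toFinite C).toFinset.card, (Set.toFinite C).toFinset, (u : V), rfl, ?_, ?_, ?_, ?_⟩
    · rw [Set.Finite.mem_toFinset]
      exact ⟨u, by rw [ConnectedComponent.mem_supp_iff]; exact hu, rfl⟩
    · intro x hx
      rw [Set.Finite.mem_toFinset] at hx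
      exact hCU hx
    · rw [← wsum_eq, hC, ← wimg]
      exact hc₀
    · intro a ha b hb hbn hadj
      exfalso
      rw [Set.Finite.mem_toFinset] at ha
      obtain ⟨a', ha', rfl⟩ := ha
      have hadj' : (G.induce (↑U : Set V)).Adj a' ⟨b, hb⟩ := by simpa using hadj
      have : (⟨b, hb⟩ : (↑U : Set V)) ∈ c₀.supp := by
        rw [ConnectedComponent.mem_supp_iff]
        rw [ConnectedComponent.mem_supp_iff] at ha'
        rw [← ha']
        exact (ConnectedComponent.connectedComponentMk_eq_of_adj hadj'.symm)
      exact hbn (by rw [Set.Finite.mem_toFinset]; exact ⟨_, this, rfl⟩)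
  obtain ⟨A, v, hcard, hvA, hAU, hAw, hcross⟩ := Nat.find_spec hP
  refine ⟨A, v, hvA, hAU, hAw, hcross, ?_⟩
  by_contra hbad
  push_neg at hbad
  obtain ⟨d, hdw⟩ := hbad
  set D : Set V := Subtype.val '' d.supp with hDdef
  have hD : D ⊆ (↑A : Set V) \ {v} := by rintro _ ⟨a, _, rfl⟩; exact a.2
  set Df : Finset V := (Set.toFinite D).toFinset with hDfdef
  have hDfc : (↑Df : Set V) = D := Set.Finite.coe_toFinset _
  have hDfA : Df ⊆ A := by
    intro x hx
    rw [Set.Finite.mem_toFinset] at hx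
    exact (hD hx).1
  have hvDf : v ∉ Df := by
    intro h
    rw [Set.Finite.mem_toFinset] at h
    exact (hD h).2 rfl
  have hDw : t < ∑ x ∈ Df, ω x := by rw [← wsum_eq, hDdef, ← wimg]; exact hdw
  have hDlt : Df.card < A.card := Finset.card_lt_card ⟨hDfA, fun h => hvDf (h hvA)⟩
  -- cross edges from D (inside U) go only to v
  have F3 : ∀ a ∈ D, ∀ b ∈ U, G.Adj a b → b ∉ D → b = v := by
    intro a ha b hb hadj hbD
    by_cases hbA : b ∈ A
    · by_contra hbv
      have hbm : b ∈ (↑A : Set V) \ {v} := ⟨hbA, hbv⟩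
      obtain ⟨a', ha', rfl⟩ := ha
      have hadj' : (G.induce ((↑A : Set V) \ {v})).Adj a' ⟨b, hbm⟩ := by simpa using hadj
      refine hbD ⟨⟨b, hbm⟩, ?_, rfl⟩
      rw [ConnectedComponent.mem_supp_iff]
      rw [ConnectedComponent.mem_supp_iff] at ha'
      rw [← ha']
      exact ConnectedComponent.connectedComponentMk_eq_of_adj hadj'.symm
    · exfalso
      obtain ⟨a', ha', rfl⟩ := ha
      have := hcross _ (a'.2.1) b hb hbA hadj
      exact a'.2.2 this
  have hDne : Df.Nonempty := by
    rw [Finset.nonempty_iff_ne_empty]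
    intro h
    rw [h, Finset.sum_empty] at hDw
    exact absurd hDw (not_lt.mpr ht.le)
  -- v has at most one neighbour in D (using acyclicity)
  have huniq : ∀ x ∈ D, G.Adj v x → ∀ y ∈ D, G.Adj v y → y = x := by
    intro x hx hvx y hy hvy
    by_contra hne
    obtain ⟨x', hx', rfl⟩ := hx
    obtain ⟨y', hy', rfl⟩ := hy
    rw [ConnectedComponent.mem_supp_iff] at hx' hy'
    have hreach : (G.induce ((↑A : Set V) \ {v})).Reachable x' y' := by
      rw [← ConnectedComponent.eq, hx', hy']
    obtain ⟨p⟩ := hreach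
    obtain ⟨q, hq⟩ := walk_out G p
    have hbridge := (isAcyclic_iff_forall_edge_isBridge.mp hG) (G.mem_edgeSet.mpr hvy)
    rw [isBridge_iff] at hbridge
    refine hbridge ?_
    rw [reachable_delete_edges_iff_exists_walk]
    refine ⟨Walk.cons hvx q, ?_⟩
    intro hmem
    rw [Walk.edges_cons, List.mem_cons] at hmem
    rcases hmem with heq | hmem
    · rw [Sym2.eq_iff] at heq
      rcases heq with ⟨-, h⟩ | ⟨h, -⟩
      · exact hne (by simp [h])
      · exact (x'.2.2 h.symm).elim
    · have := q.fst_mem_support_of_mem_edges hmem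
      exact (hq v this).2 rfl
  -- construct a smaller good pair, contradicting minimality
  by_cases hnb : ∃ x ∈ D, G.Adj v x
  · obtain ⟨x, hxD, hvx⟩ := hnb
    have : P Df.card := by
      refine ⟨Df, x, rfl, by rw [Set.Finite.mem_toFinset]; exact hxD, hDfA.trans hAU, hDw, ?_⟩
      intro a ha b hb hbDf hadj
      rw [Set.Finite.mem_toFinset] at ha
      have hbD : b ∉ D := fun h => hbDf (by rw [Set.Finite.mem_toFinset]; exact h)
      have hbv := F3 a ha b hb hadj hbD
      subst hbv
      exact huniq x hxD hvx a ha hadj.symm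
    exact Nat.find_min hP (hcard ▸ hDlt) this
  · push_neg at hnb
    obtain ⟨d₀, hd₀⟩ := hDne
    have : P Df.card := by
      refine ⟨Df, d₀, rfl, hd₀, hDfA.trans hAU, hDw, ?_⟩
      intro a ha b hb hbDf hadj
      rw [Set.Finite.mem_toFinset] at ha
      have hbD : b ∉ D := fun h => hbDf (by rw [Set.Finite.mem_toFinset]; exact h)
      have hbv := F3 a ha b hb hadj hbD
      subst hbv
      exact absurd hadj.symm (hnb a ha)
    exact Nat.find_min hP (hcard ▸ hDlt) this

lemma forest_sep [Fintype V] [DecidableEq V] {G : SimpleGraph V} (hG : G.IsAcyclic)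
    (ω : V → ℝ) (hω : ∀ v, 0 ≤ ω v) {t : ℝ} (ht : 0 < t) (U : Finset V) :
    ∃ S : Finset V, S ⊆ U ∧ (S = ∅ ∨ (S.card : ℝ) * t < ∑ v ∈ U, ω v) ∧
      ∀ c : (G.induce ((↑U : Set V) \ (↑S : Set V))).ConnectedComponent,
        (∑ᶠ v ∈ c.supp, ω (v : V)) ≤ t := by
  classical
  induction U using Finset.strongInduction with
  | _ U IH =>
  by_cases hall : ∀ c : (G.induce (↑U : Set V)).ConnectedComponent,
      (∑ᶠ v ∈ c.supp, ω (v : V)) ≤ t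
  · refine ⟨∅, Finset.empty_subset _, Or.inl rfl, ?_⟩
    have hset : ((↑U : Set V) \ (↑(∅ : Finset V) : Set V)) = (↑U : Set V) := by simp
    rw [hset]
    exact hall
  · push_neg at hall
    obtain ⟨A, v, hvA, hAU, hAw, hcross, hkey⟩ := min_pair hG ω hω ht U hall
    obtain ⟨S', hS'U, hS'c, hS'comp⟩ := IH (U \ A) (Finset.sdiff_ssubset hAU ⟨v, hvA⟩)
    have hvS' : v ∉ S' := fun h => (Finset.mem_sdiff.mp (hS'U h)).2 hvA
    refine ⟨insert v S', ?_, Or.inr ?_, ?_⟩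
    · exact Finset.insert_subset (hAU hvA) (hS'U.trans (Finset.sdiff_subset))
    · have h1 : (S'.card : ℝ) * t ≤ ∑ x ∈ U \ A, ω x := by
        rcases hS'c with rfl | hlt
        · simp only [Finset.card_empty, Nat.cast_zero, zero_mul]
          exact Finset.sum_nonneg fun x _ => hω x
        · exact hlt.le
      have h2 : (∑ x ∈ U \ A, ω x) + ∑ x ∈ A, ω x = ∑ x ∈ U, ω x :=
        Finset.sum_sdiff hAU
      rw [Finset.card_insert_of_notMem hvS']
      push_cast
      calc ((S'.card : ℝ) + 1) * t = S'.card * t + t := by ring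
        _ < (∑ x ∈ U \ A, ω x) + ∑ x ∈ A, ω x := by
            apply add_lt_add_of_le_of_lt h1 hAw
        _ = ∑ x ∈ U, ω x := h2
    · intro c
      have hZdef : ((↑U : Set V) \ (↑(insert v S') : Set V)) = ((↑U : Set V) \ (↑(insert v S') : Set V)) := rfl
      -- propagation of the side along walks
      have hstep : ∀ {a b : ↥((↑U : Set V) \ (↑(insert v S') : Set V))}, (G.induce ((↑U : Set V) \ (↑(insert v S') : Set V))).Adj a b → (a : V) ∈ A → (b : V) ∈ A := by
        intro a b hab haA
        by_contra hbA
        have hadj : G.Adj (a : V) (b : V) := by simpa using hab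
        have hbU : (b : V) ∈ U := b.2.1
        have := hcross _ haA _ hbU hbA hadj
        exact a.2.2 (by simp [this])
      have hprop : ∀ {a b : ↥((↑U : Set V) \ (↑(insert v S') : Set V))} (p : (G.induce ((↑U : Set V) \ (↑(insert v S') : Set V))).Walk a b), (a : V) ∈ A → (b : V) ∈ A := by
        intro a b p
        induction p with
        | nil => exact id
        | cons h q ih => exact fun ha => ih (hstep h ha)
      have hpropn : ∀ {a b : ↥((↑U : Set V) \ (↑(insert v S') : Set V))} (p : (G.induce ((↑U : Set V) \ (↑(insert v S') : Set V))).Walk a b), (a : V) ∉ A → (b : V) ∉ A := by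
        intro a b p ha hb
        exact ha (hprop p.reverse hb)
      obtain ⟨u, hu⟩ := c.exists_rep
      have husupp : u ∈ c.supp := by
        rw [ConnectedComponent.mem_supp_iff]; exact hu
      by_cases hside : (u : V) ∈ A
      · have hsub : Subtype.val '' c.supp ⊆ (↑A : Set V) \ {v} := by
          rintro _ ⟨w, hw, rfl⟩
          rw [ConnectedComponent.mem_supp_iff] at hw
          obtain ⟨p⟩ := SimpleGraph.ConnectedComponent.exact (hw.trans hu.symm)
          refine ⟨hprop p.reverse hside, ?_⟩
          intro hwv
          rw [Set.mem_singleton_iff] at hwv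
          exact w.2.2 (by simp [hwv])
        obtain ⟨c', hc'⟩ := comp_contain G c hsub
        calc (∑ᶠ x ∈ c.supp, ω (x : V)) = ∑ᶠ x ∈ (Subtype.val '' c.supp), ω x := wimg ω G c
          _ ≤ ∑ᶠ x ∈ (Subtype.val '' c'.supp), ω x := wsum_mono ω hω hc'
          _ = ∑ᶠ x ∈ c'.supp, ω (x : V) := (wimg ω G c').symm
          _ ≤ t := hkey c'
      · have hsub : Subtype.val '' c.supp ⊆ ((↑(U \ A) : Set V) \ (↑S' : Set V)) := by
          rintro _ ⟨w, hw, rfl⟩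
          rw [ConnectedComponent.mem_supp_iff] at hw
          obtain ⟨p⟩ := SimpleGraph.ConnectedComponent.exact (hw.trans hu.symm)
          have hwA : (w : V) ∉ A := hpropn p.reverse hside
          have hwZ : (w : V) ∈ ((↑U : Set V) \ (↑(insert v S') : Set V)) := w.2
          rw [Set.mem_diff] at hwZ
          refine ⟨?_, ?_⟩
          · rw [Finset.coe_sdiff, Set.mem_diff]
            exact ⟨hwZ.1, hwA⟩
          · intro hwS'
            exact hwZ.2 (by simp [Finset.mem_insert]; right; exact hwS')
        obtain ⟨c', hc'⟩ := comp_contain G c hsub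
        calc (∑ᶠ x ∈ c.supp, ω (x : V)) = ∑ᶠ x ∈ (Subtype.val '' c.supp), ω x := wimg ω G c
          _ ≤ ∑ᶠ x ∈ (Subtype.val '' c'.supp), ω x := wsum_mono ω hω hc'
          _ = ∑ᶠ x ∈ c'.supp, ω (x : V) := (wimg ω G c').symm
          _ ≤ t := hS'comp c'

end Helpers

/-- A graph is an `ℓ`-forest if it can be made acyclic by deleting at most `ℓ` edges. -/
def IsLForest {V : Type*} (G : SimpleGraph V) (ℓ : ℕ) : Prop :=
  ∃ s : Finset (Sym2 V), ↑s ⊆ G.edgeSet ∧ s.card ≤ ℓ ∧ (G.deleteEdges ↑s).IsAcyclic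

/-- an `ℓ`-forest with nonnegative vertex weights admits, for every `β > 0`,
a set `S` of at most `β + ℓ` vertices such that every connected component of `T - S`
has total weight at most `ω(V)/β`. -/
theorem stmt_7 {V : Type*} [Fintype V] [DecidableEq V] (T : SimpleGraph V) (ℓ : ℕ)
    (hT : IsLForest T ℓ) (ω : V → ℝ) (hω : ∀ v, 0 ≤ ω v) (β : ℝ) (hβ : 0 < β) :
    ∃ S : Finset V, (S.card : ℝ) ≤ β + (ℓ : ℝ) ∧
      ∀ c : (T.induce ((↑S)ᶜ : Set V)).ConnectedComponent,
        (∑ᶠ v ∈ c.supp, ω (v : V)) ≤ (∑ v : V, ω v) / β := by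
  classical
  obtain ⟨s, hsE, hsl, hsA⟩ := hT
  have hWnn : 0 ≤ ∑ v : V, ω v := Finset.sum_nonneg fun v _ => hω v
  by_cases hW : (∑ v : V, ω v) = 0
  · refine ⟨∅, by simp; positivity, ?_⟩
    have hzero : ∀ v ∈ Finset.univ, ω v = 0 :=
      (Finset.sum_eq_zero_iff_of_nonneg (fun v _ => hω v)).mp hW
    intro c
    have h1 : (∑ᶠ v ∈ c.supp, ω (v : V)) = 0 := by
      rw [wimg ω T c, wsum_eq]
      exact Finset.sum_eq_zero fun x _ => hzero x (Finset.mem_univ x)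
    rw [h1, hW, zero_div]
  · have hWpos : 0 < ∑ v : V, ω v := lt_of_le_of_ne hWnn (Ne.symm hW)
    have ht : 0 < (∑ v : V, ω v) / β := div_pos hWpos hβ
    obtain ⟨S₀, hS₀U, hS₀c, hS₀comp⟩ := forest_sep hsA ω hω ht Finset.univ
    set Sdel : Finset V := s.image (fun e => e.out.1) with hSdel
    refine ⟨S₀ ∪ Sdel, ?_, ?_⟩
    · have h1 : ((S₀ ∪ Sdel).card : ℝ) ≤ (S₀.card : ℝ) + (Sdel.card : ℝ) := by
        exact_mod_cast Finset.card_union_le S₀ Sdel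
      have h2 : (Sdel.card : ℝ) ≤ (ℓ : ℝ) := by
        exact_mod_cast (Finset.card_image_le).trans hsl
      have h3 : (S₀.card : ℝ) ≤ β := by
        rcases hS₀c with rfl | hlt
        · simpa using hβ.le
        · have hβW : β * ((∑ v : V, ω v) / β) = ∑ v : V, ω v := by field_simp
          nlinarith [hlt, ht, hβW]
      linarith
    · have hind : T.induce ((↑(S₀ ∪ Sdel) : Set V)ᶜ) =
          (T.deleteEdges ↑s).induce ((↑(S₀ ∪ Sdel) : Set V)ᶜ) := by
        ext a b
        simp only [comap_adj, Function.Embedding.coe_subtype, deleteEdges_adj]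
        constructor
        · intro h
          refine ⟨h, fun hmem => ?_⟩
          have hout := Sym2.out_fst_mem (s((a : V), (b : V)))
          rw [Sym2.mem_iff] at hout
          have hin : (s((a : V), (b : V))).out.1 ∈ Sdel :=
            Finset.mem_image_of_mem _ hmem
          rcases hout with h1 | h1
          · exact a.2 (Finset.mem_coe.mpr (Finset.mem_union_right _ (h1 ▸ hin)))
          · exact b.2 (Finset.mem_coe.mpr (Finset.mem_union_right _ (h1 ▸ hin)))
        · exact fun h => h.1
      rw [hind]
      intro c
      have hsub : Subtype.val '' c.supp ⊆
          ((↑(Finset.univ : Finset V) : Set V) \ (↑S₀ : Set V)) := by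
        rintro _ ⟨w, _, rfl⟩
        refine ⟨by simp, fun h => w.2 ?_⟩
        exact Finset.mem_coe.mpr (Finset.mem_union_left _ (Finset.mem_coe.mp h))
      obtain ⟨c', hc'⟩ := comp_contain (T.deleteEdges ↑s) c hsub
      calc (∑ᶠ x ∈ c.supp, ω (x : V))
          = ∑ᶠ x ∈ (Subtype.val '' c.supp), ω x := wimg ω _ c
        _ ≤ ∑ᶠ x ∈ (Subtype.val '' c'.supp), ω x := wsum_mono ω hω hc'
        _ = ∑ᶠ x ∈ c'.supp, ω (x : V) := (wimg ω _ c').symm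
        _ ≤ (∑ v : V, ω v) / β := hS₀comp c'
end

section
/- Let G be a graph with a tree decomposition of width tw, with non-negative vertex weights ω, and let β > 0. Then there exists a set S of at most β·(tw+1) vertices such that every connected component of G - S has total weight at most ω(V(G))/β. -/
set_option linter.unusedSectionVars false

/-- `(T, B)` is a tree decomposition of `G`. -/
structure IsTreeDecomp {V ι : Type*} (G : SimpleGraph V) (T : SimpleGraph ι)
    (B : ι → Finset V) : Prop where
  tree : T.IsTree
  covers_vertices : ∀ v : V, ∃ i, v ∈ B i
  covers_edges : ∀ ⦃u v : V⦄, G.Adj u v → ∃ i, u ∈ B i ∧ v ∈ B i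
  coherent : ∀ v : V, (T.induce {i | v ∈ B i}).Connected

open SimpleGraph

namespace Stmt8Aux

variable {ι : Type*} [DecidableEq ι] {T : SimpleGraph ι} (hT : T.IsTree)

/-- The canonical path between two vertices of a tree. -/
noncomputable def cp (x y : ι) : T.Walk x y := (hT.existsUnique_path x y).exists.choose

lemma cp_isPath (x y : ι) : (cp hT x y).IsPath := (hT.existsUnique_path x y).exists.choose_spec

lemma cp_eq {x y : ι} (p : T.Walk x y) (hp : p.IsPath) : p = cp hT x y :=
  ((hT.existsUnique_path x y).unique hp (cp_isPath hT x y))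

lemma support_cp_subset {x y : ι} (w : T.Walk x y) : (cp hT x y).support ⊆ w.support := by
  rw [← cp_eq hT w.toPath.1 w.toPath.2]
  exact w.support_toPath_subset

/-- `i` lies on the tree path from `x` to `y`. -/
def onP (i x y : ι) : Prop := i ∈ (cp hT x y).support

lemma onP_left (i y : ι) : onP hT i i y := (cp hT i y).start_mem_support

lemma not_onP_of_walk {i x y : ι} (w : T.Walk x y) (h : i ∉ w.support) : ¬ onP hT i x y :=
  fun hi => h (support_cp_subset hT w hi)

lemma onP_symm {i x y : ι} (h : onP hT i x y) : onP hT i y x := by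
  have : (cp hT x y).reverse = cp hT y x := cp_eq hT _ ((cp_isPath hT x y).reverse)
  unfold onP
  rw [← this, SimpleGraph.Walk.support_reverse, List.mem_reverse]
  exact h

lemma not_onP_trans {i x y z : ι} (h1 : ¬ onP hT i x y) (h2 : ¬ onP hT i y z) :
    ¬ onP hT i x z := by
  refine not_onP_of_walk hT ((cp hT x y).append (cp hT y z)) ?_
  intro hi
  rcases (SimpleGraph.Walk.mem_support_append_iff _ _).1 hi with h | h
  · exact h1 h
  · exact h2 h

lemma cp_split {i x y : ι} (h : onP hT i x y) :
    cp hT x y = (cp hT x i).append (cp hT i y) := by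
  have hsp := (cp hT x y).take_spec h
  have h1 : (cp hT x y).takeUntil i h = cp hT x i := cp_eq hT _ ((cp_isPath hT x y).takeUntil h)
  have h2 : (cp hT x y).dropUntil i h = cp hT i y := cp_eq hT _ ((cp_isPath hT x y).dropUntil h)
  rw [← hsp, h1, h2]

lemma onP_trans_root {i r x y : ι} (hx : onP hT i r x) (hy : ¬ onP hT i r y) :
    onP hT i x y := by
  by_contra h
  exact (not_onP_trans hT hy (fun hyx => h (onP_symm hT hyx))) hx

end Stmt8Aux

namespace Stmt8Aux

variable {ι : Type*} [DecidableEq ι] {T : SimpleGraph ι} (hT : T.IsTree)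

lemma child_exists {i x : ι} (h : i ≠ x) :
    ∃ (m : ι) (hadj : T.Adj i m) (p : T.Walk m x), cp hT i x = SimpleGraph.Walk.cons hadj p :=
  SimpleGraph.Walk.exists_eq_cons_of_ne h (cp hT i x)

/-- The child of `i` towards `x`. -/
noncomputable def child (i x : ι) (h : i ≠ x) : ι := (child_exists hT h).choose

lemma child_adj {i x : ι} (h : i ≠ x) : T.Adj i (child hT i x h) :=
  (child_exists hT h).choose_spec.choose

lemma child_avoid {i x : ι} (h : i ≠ x) : ¬ onP hT i (child hT i x h) x := by
  obtain ⟨p, hp⟩ := (child_exists hT h).choose_spec.choose_spec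
  have hpath : (cp hT i x).IsPath := cp_isPath hT i x
  rw [hp] at hpath
  refine not_onP_of_walk hT p ?_
  intro hi
  have := hpath.support_nodup
  rw [SimpleGraph.Walk.support_cons] at this
  exact (List.nodup_cons.1 this).1 hi

lemma child_mem_supp {i x : ι} (h : i ≠ x) : child hT i x h ∈ (cp hT i x).support := by
  obtain ⟨p, hp⟩ := (child_exists hT h).choose_spec.choose_spec
  rw [hp, SimpleGraph.Walk.support_cons]
  exact List.mem_cons.2 (Or.inr p.start_mem_support)

lemma child_unique {i x : ι} (h : i ≠ x) (m : ι) (hadj : T.Adj i m)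
    (havoid : ¬ onP hT i m x) : m = child hT i x h := by
  set c := child hT i x h with hc
  by_contra hne
  have h1 : ¬ onP hT i x c := fun hh => child_avoid hT h (onP_symm hT hh)
  have h2 : ¬ onP hT i m c := not_onP_trans hT havoid h1
  -- the walk m -- i -- c is a path, hence the canonical path, and contains i
  have hadj2 : T.Adj m i := hadj.symm
  have hadjc : T.Adj i c := child_adj hT h
  have w2 : T.Walk m c := SimpleGraph.Walk.cons hadj2 (SimpleGraph.Walk.cons hadjc SimpleGraph.Walk.nil)
  have hw2path : (SimpleGraph.Walk.cons hadj2 (SimpleGraph.Walk.cons hadjc SimpleGraph.Walk.nil) : T.Walk m c).IsPath := by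
    rw [SimpleGraph.Walk.isPath_def]
    simp [SimpleGraph.Walk.support_cons, List.nodup_cons, hadj2.ne, hadjc.ne, hne]
  have := cp_eq hT _ hw2path
  apply h2
  unfold onP
  rw [← this]
  simp [SimpleGraph.Walk.support_cons]

lemma onP_child_root {i r x : ι} (hrx : onP hT i r x) (h : i ≠ x) :
    onP hT i r (child hT i x h) := by
  by_contra hh
  have := onP_trans_root hT hrx hh
  exact child_avoid hT h (onP_symm hT this)

/-- depth of a node relative to root `r`. -/
noncomputable def depth (r i : ι) : ℕ := (cp hT r i).length

lemma cp_adj {i m : ι} (hadj : T.Adj i m) :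
    cp hT i m = SimpleGraph.Walk.cons hadj SimpleGraph.Walk.nil := by
  symm
  refine (cp_eq hT _ ?_).symm.symm
  rw [SimpleGraph.Walk.isPath_def]
  simp [hadj.ne]

lemma depth_child {i r x : ι} (hrx : onP hT i r x) (h : i ≠ x) :
    depth hT r (child hT i x h) = depth hT r i + 1 := by
  have hrc : onP hT i r (child hT i x h) := onP_child_root hT hrx h
  have hsplit := cp_split hT hrc
  unfold depth
  rw [hsplit, SimpleGraph.Walk.length_append, cp_adj hT (child_adj hT h)]
  rfl

lemma child_onP_root {i r x : ι} (hrx : onP hT i r x) (h : i ≠ x) :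
    onP hT (child hT i x h) r x := by
  unfold onP
  rw [cp_split hT hrx, SimpleGraph.Walk.mem_support_append_iff]
  exact Or.inr (child_mem_supp hT h)

end Stmt8Aux

namespace Stmt8Aux

section Decomp

variable {V ι : Type*} [DecidableEq ι] {G : SimpleGraph V} {T : SimpleGraph ι}
  {B : ι → Finset V} (htd : IsTreeDecomp G T B)

/-- a chosen bag containing `v`. -/
noncomputable def top (v : V) : ι := (htd.covers_vertices v).choose

lemma mem_top (v : V) : v ∈ B (top htd v) := (htd.covers_vertices v).choose_spec

lemma mem_bag_of_onP {u : V} {i j j' : ι} (hu : u ∈ B j) (hu' : u ∈ B j')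
    (hi : onP htd.tree i j j') : u ∈ B i := by
  obtain ⟨w'⟩ := (htd.coherent u).preconnected ⟨j, hu⟩ ⟨j', hu'⟩
  have hw : (cp htd.tree j j').support ⊆
      (w'.map (SimpleGraph.Embedding.induce {l | u ∈ B l}).toHom).support :=
    support_cp_subset htd.tree _
  have := hw hi
  rw [SimpleGraph.Walk.support_map, List.mem_map] at this
  obtain ⟨a, _, ha⟩ := this
  have h2 := a.2
  simp only [Set.mem_setOf_eq] at h2
  have : (a : ι) = i := ha
  rwa [this] at h2

lemma edge_step {u v : V} {i : ι} (hadj : G.Adj u v) (hu : u ∉ B i) (hv : v ∉ B i) :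
    ¬ onP htd.tree i (top htd u) (top htd v) ∧
      (∀ r : ι, onP htd.tree i r (top htd u) → onP htd.tree i r (top htd v)) := by
  obtain ⟨j, hju, hjv⟩ := htd.covers_edges hadj
  have h1 : ¬ onP htd.tree i (top htd u) j :=
    fun h => hu (mem_bag_of_onP htd (mem_top htd u) hju h)
  have h2 : ¬ onP htd.tree i j (top htd v) :=
    fun h => hv (mem_bag_of_onP htd hjv (mem_top htd v) h)
  have hmain := not_onP_trans htd.tree h1 h2
  refine ⟨hmain, fun r hr => ?_⟩
  by_contra hh
  exact hmain (onP_trans_root htd.tree hr hh)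

end Decomp

end Stmt8Aux

namespace Stmt8Aux

section Main

variable {V ι : Type*} [Fintype V] [DecidableEq V] [DecidableEq ι]
  {G : SimpleGraph V} {T : SimpleGraph ι} {B : ι → Finset V}

lemma rec_lemma (htd : IsTreeDecomp G T B) (tw : ℕ) (hw : ∀ i, (B i).card ≤ tw + 1)
    (ω : V → ℝ) (hω : ∀ v, 0 ≤ ω v) (W₀ : ℝ) (hW₀ : 0 ≤ W₀) (r : ι) :
    ∀ (n : ℕ) (A : Finset V), A.card ≤ n →
    ∃ (S : Finset V) (k : ℕ), S ⊆ A ∧ S.card ≤ k * (tw + 1) ∧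
      (k : ℝ) * W₀ ≤ ∑ v ∈ A, ω v ∧
      ∀ C : Finset V, C ⊆ A \ S →
        (∀ u ∈ C, ∀ v ∈ C, ∃ w : G.Walk u v, ∀ x ∈ w.support, x ∈ C) →
        ∑ v ∈ C, ω v ≤ W₀ := by
  classical
  intro n
  induction n with
  | zero =>
    intro A hA
    refine ⟨∅, 0, Finset.empty_subset _, by simp, by simpa using Finset.sum_nonneg fun v _ => hω v, ?_⟩
    intro C hC _
    have hA0 : A = ∅ := Finset.card_eq_zero.1 (Nat.le_zero.1 hA)
    have : C = ∅ := Finset.subset_empty.1 (by simpa [hA0] using hC)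
    simpa [this] using hW₀
  | succ n ih =>
    intro A hA
    by_cases hbase : ∑ v ∈ A, ω v ≤ W₀
    · refine ⟨∅, 0, Finset.empty_subset _, by simp, by simpa using Finset.sum_nonneg fun v _ => hω v, ?_⟩
      intro C hC _
      have hCA : C ⊆ A := by simpa using hC
      calc ∑ v ∈ C, ω v ≤ ∑ v ∈ A, ω v :=
            Finset.sum_le_sum_of_subset_of_nonneg hCA fun v _ _ => hω v
        _ ≤ W₀ := hbase
    · push_neg at hbase
      set tp : V → ι := top htd with htp
      set D : ι → Finset V := fun i => A.filter (fun v => onP htd.tree i r (tp v)) with hD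
      have hDr : D r = A := by
        apply Finset.filter_true_of_mem
        intro v _
        exact onP_left htd.tree r (tp v)
      set Cand : Set ι := {i | W₀ < ∑ v ∈ D i, ω v} with hCand
      have hrC : r ∈ Cand := by simp only [hCand, Set.mem_setOf_eq, hDr]; exact hbase
      have hDne : ∀ i ∈ Cand, (D i).Nonempty := by
        intro i hi
        rw [Finset.nonempty_iff_ne_empty]
        intro h0
        rw [hCand, Set.mem_setOf_eq, h0, Finset.sum_empty] at hi
        exact absurd hW₀ (not_le.2 hi)
      have hfin : Cand.Finite := by
        have hsub : Cand ⊆ ⋃ v ∈ (A : Set V), {x | x ∈ (cp htd.tree r (tp v)).support} := by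
          intro i hi
          obtain ⟨v, hv⟩ := hDne i hi
          rw [hD] at hv
          simp only [Finset.mem_filter] at hv
          exact Set.mem_biUnion hv.1 hv.2
        exact Set.Finite.subset
          (Set.Finite.biUnion A.finite_toSet fun v _ => (cp htd.tree r (tp v)).support.finite_toSet)
          hsub
      obtain ⟨i, hiC, hmax⟩ := Set.exists_max_image Cand (depth htd.tree r) hfin ⟨r, hrC⟩
      have hiA : W₀ < ∑ v ∈ D i, ω v := hiC
      set A₂ : Finset V := (A.filter (fun v => ¬ onP htd.tree i r (tp v))) \ B i with hA₂
      have hA₂A : A₂ ⊆ A := (Finset.sdiff_subset).trans (Finset.filter_subset _ _)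
      have hA₂lt : A₂.card < A.card := by
        obtain ⟨v, hv⟩ := hDne i hiC
        rw [hD] at hv
        simp only [Finset.mem_filter] at hv
        apply Finset.card_lt_card
        rw [Finset.ssubset_iff_of_subset hA₂A]
        refine ⟨v, hv.1, ?_⟩
        rw [hA₂]
        simp only [Finset.mem_sdiff, Finset.mem_filter, not_and, not_not]
        intro h
        exact absurd (h.2 hv.2) (by simp [h.2 hv.2])
      have hA₂n : A₂.card ≤ n := by omega
      obtain ⟨S₂, k₂, hS₂A, hS₂c, hS₂w, hS₂comp⟩ := ih A₂ hA₂n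
      refine ⟨(A ∩ B i) ∪ S₂, k₂ + 1, ?_, ?_, ?_, ?_⟩
      · exact Finset.union_subset Finset.inter_subset_left (hS₂A.trans hA₂A)
      · calc ((A ∩ B i) ∪ S₂).card ≤ (A ∩ B i).card + S₂.card := Finset.card_union_le _ _
          _ ≤ (tw + 1) + k₂ * (tw + 1) := by
              have h1 : (A ∩ B i).card ≤ (B i).card := Finset.card_le_card Finset.inter_subset_right
              have := hw i
              omega
          _ = (k₂ + 1) * (tw + 1) := by ring
      · -- weight bound
        have hdisj : Disjoint A₂ (D i) := by
          rw [Finset.disjoint_left]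
          intro v hv1 hv2
          rw [hA₂] at hv1
          rw [hD] at hv2
          simp only [Finset.mem_sdiff, Finset.mem_filter] at hv1 hv2
          exact hv1.1.2 hv2.2
        have hsum : ∑ v ∈ A₂, ω v + ∑ v ∈ D i, ω v ≤ ∑ v ∈ A, ω v := by
          rw [← Finset.sum_union hdisj]
          apply Finset.sum_le_sum_of_subset_of_nonneg _ (fun v _ _ => hω v)
          exact Finset.union_subset hA₂A (Finset.filter_subset _ _)
        push_cast
        nlinarith [hS₂w, hiA]
      · -- components
        intro C hC hconn
        have hCA : ∀ v ∈ C, v ∈ A := fun v hv => (Finset.mem_sdiff.1 (hC hv)).1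
        have hCS : ∀ v ∈ C, v ∉ (A ∩ B i) ∪ S₂ := fun v hv => (Finset.mem_sdiff.1 (hC hv)).2
        have hCBi : ∀ v ∈ C, v ∉ B i := by
          intro v hv hvB
          exact hCS v hv (Finset.mem_union_left _ (Finset.mem_inter.2 ⟨hCA v hv, hvB⟩))
        by_cases hcase : ∀ v ∈ C, ¬ onP htd.tree i r (tp v)
        · apply hS₂comp C _ hconn
          intro v hv
          rw [Finset.mem_sdiff]
          constructor
          · rw [hA₂]
            simp only [Finset.mem_sdiff, Finset.mem_filter]
            exact ⟨⟨hCA v hv, hcase v hv⟩, hCBi v hv⟩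
          · exact fun hvS₂ => hCS v hv (Finset.mem_union_right _ hvS₂)
        · push_neg at hcase
          obtain ⟨u₀, hu₀C, hu₀P⟩ := hcase
          have hne : i ≠ tp u₀ := fun h => hCBi u₀ hu₀C (h ▸ mem_top htd u₀)
          set m := child htd.tree i (tp u₀) hne with hm
          have hxx : ¬ onP htd.tree i (tp u₀) (tp u₀) := by
            have heq : (SimpleGraph.Walk.nil : T.Walk (tp u₀) (tp u₀)) = cp htd.tree (tp u₀) (tp u₀) :=
              cp_eq htd.tree _ SimpleGraph.Walk.IsPath.nil
            unfold onP
            rw [← heq]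
            simp [hne]
          have hwalkind : ∀ {a b : V} (w : G.Walk a b), (∀ x ∈ w.support, x ∈ C) →
              (onP htd.tree i r (tp a) ∧ ¬ onP htd.tree i (tp u₀) (tp a)) →
              (onP htd.tree i r (tp b) ∧ ¬ onP htd.tree i (tp u₀) (tp b)) := by
            intro a b w
            induction w with
            | nil => exact fun _ h => h
            | cons hadj p ihw =>
              rename_i a' c' b'
              intro hsupp hstart
              have hac : a' ∈ C := hsupp _ (SimpleGraph.Walk.start_mem_support _)
              have hcc : c' ∈ C := by
                apply hsupp
                rw [SimpleGraph.Walk.support_cons]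
                exact List.mem_cons.2 (Or.inr p.start_mem_support)
              have hstep := edge_step htd hadj (hCBi a' hac) (hCBi c' hcc)
              refine ihw ?_ ⟨hstep.2 r hstart.1, not_onP_trans htd.tree hstart.2 hstep.1⟩
              intro x hx
              apply hsupp
              rw [SimpleGraph.Walk.support_cons]
              exact List.mem_cons.2 (Or.inr hx)
          have key : ∀ v ∈ C, onP htd.tree m r (tp v) := by
            intro v hvC
            obtain ⟨w, hwsupp⟩ := hconn u₀ hu₀C v hvC
            obtain ⟨h1, h2⟩ := hwalkind w hwsupp ⟨hu₀P, hxx⟩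
            have hnev : i ≠ tp v := fun h => hCBi v hvC (h ▸ mem_top htd v)
            have havoid : ¬ onP htd.tree i m (tp v) :=
              not_onP_trans htd.tree (child_avoid htd.tree hne) h2
            have hmeq : m = child htd.tree i (tp v) hnev :=
              child_unique htd.tree hnev m (child_adj htd.tree hne) havoid
            rw [hmeq]
            exact child_onP_root htd.tree h1 hnev
          have hCD : C ⊆ D m := by
            intro v hv
            rw [hD]
            exact Finset.mem_filter.2 ⟨hCA v hv, key v hv⟩
          have hDm : ∑ v ∈ D m, ω v ≤ W₀ := by
            by_contra hcon
            push_neg at hcon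
            have hmC : m ∈ Cand := hcon
            have := hmax m hmC
            rw [hm, depth_child htd.tree hu₀P hne] at this
            omega
          calc ∑ v ∈ C, ω v ≤ ∑ v ∈ D m, ω v :=
                Finset.sum_le_sum_of_subset_of_nonneg hCD fun v _ _ => hω v
            _ ≤ W₀ := hDm

end Main

end Stmt8Aux

/-- given a tree decomposition of width `tw` and nonnegative vertex
weights, for every `β > 0` there is a set `S` of at most `β(tw+1)` vertices such that
every connected component of `G - S` has weight at most `ω(V)/β`. -/
theorem stmt_8 {V ι : Type*} [Fintype V] [DecidableEq V] (G : SimpleGraph V)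
    (T : SimpleGraph ι) (B : ι → Finset V) (htd : IsTreeDecomp G T B) (tw : ℕ)
    (hw : ∀ i, (B i).card ≤ tw + 1)
    (ω : V → ℝ) (hω : ∀ v, 0 ≤ ω v) (β : ℝ) (hβ : 0 < β) :
    ∃ S : Finset V, (S.card : ℝ) ≤ β * ((tw : ℝ) + 1) ∧
      ∀ c : (G.induce ((↑S)ᶜ : Set V)).ConnectedComponent,
        (∑ᶠ v ∈ c.supp, ω (v : V)) ≤ (∑ v : V, ω v) / β := by
  classical
  obtain ⟨r⟩ : Nonempty ι := htd.tree.isConnected.nonempty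
  have hWnn : (0:ℝ) ≤ ∑ v : V, ω v := Finset.sum_nonneg fun v _ => hω v
  -- a helper converting the finsum over a component's support to a finset sum
  have hconv : ∀ (S : Finset V) (c : (G.induce ((↑S)ᶜ : Set V)).ConnectedComponent),
      (∑ᶠ v ∈ c.supp, ω (v : V)) =
        ∑ v ∈ (Set.toFinite (Subtype.val '' c.supp)).toFinset, ω v := by
    intro S c
    rw [← finsum_mem_coe_finset, Set.Finite.coe_toFinset]
    exact (finsum_mem_image (Subtype.val_injective.injOn)).symm
  by_cases hW0 : ∑ v : V, ω v = 0
  · refine ⟨∅, by simpa using by positivity, ?_⟩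
    intro c
    have hz : ∀ v : V, ω v = 0 := by
      intro v
      exact (Finset.sum_eq_zero_iff_of_nonneg (fun v _ => hω v)).1 hW0 v (Finset.mem_univ v)
    rw [hconv ∅ c, hW0, zero_div]
    rw [Finset.sum_congr rfl (fun v _ => hz v), Finset.sum_const, smul_zero]
  · have hWpos : (0:ℝ) < ∑ v : V, ω v := lt_of_le_of_ne hWnn (Ne.symm hW0)
    set W₀ : ℝ := (∑ v : V, ω v) / β with hW₀def
    have hW₀pos : 0 < W₀ := div_pos hWpos hβ
    obtain ⟨S, k, -, hSc, hkw, hcomp⟩ :=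
      Stmt8Aux.rec_lemma htd tw hw ω hω W₀ hW₀pos.le r (Fintype.card V) Finset.univ (le_of_eq (Finset.card_univ))
    have hkβ : (k : ℝ) ≤ β := by
      have hW : (∑ v : V, ω v) = β * W₀ := by
        rw [hW₀def]; field_simp
      rw [hW] at hkw
      exact le_of_mul_le_mul_right (by linarith) hW₀pos
    refine ⟨S, ?_, ?_⟩
    · calc (S.card : ℝ) ≤ ((k * (tw + 1) : ℕ) : ℝ) := by exact_mod_cast hSc
        _ = (k : ℝ) * ((tw : ℝ) + 1) := by push_cast; ring
        _ ≤ β * ((tw : ℝ) + 1) := by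
            apply mul_le_mul_of_nonneg_right hkβ
            positivity
    · intro c
      rw [hconv S c]
      set Cfin := (Set.toFinite (Subtype.val '' c.supp)).toFinset with hCfin
      apply hcomp Cfin
      · intro v hv
        rw [hCfin, Set.Finite.mem_toFinset] at hv
        obtain ⟨x, -, rfl⟩ := hv
        rw [Finset.mem_sdiff]
        refine ⟨Finset.mem_univ _, ?_⟩
        exact fun hxS => x.2 (Finset.mem_coe.2 hxS)
      · intro u hu v hv
        rw [hCfin, Set.Finite.mem_toFinset] at hu hv
        obtain ⟨a, ha, rfl⟩ := hu
        obtain ⟨b, hb, rfl⟩ := hv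
        rw [SimpleGraph.ConnectedComponent.mem_supp_iff] at ha hb
        have hreach : (G.induce ((↑S)ᶜ : Set V)).Reachable a b :=
          SimpleGraph.ConnectedComponent.exact (ha.trans hb.symm)
        obtain ⟨p⟩ := hreach
        refine ⟨p.map (SimpleGraph.Embedding.induce _).toHom, ?_⟩
        intro x hx
        have hx : x ∈ p.support.map (SimpleGraph.Embedding.induce (G := G) ((↑S)ᶜ : Set V)).toHom := by
          rw [← SimpleGraph.Walk.support_map]; exact hx
        rw [List.mem_map] at hx
        obtain ⟨y, hy, rfl⟩ := hx
        rw [hCfin, Set.Finite.mem_toFinset]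
        refine ⟨y, ?_, rfl⟩
        rw [SimpleGraph.ConnectedComponent.mem_supp_iff, ← ha]
        exact SimpleGraph.ConnectedComponent.sound ⟨(p.takeUntil y hy).reverse⟩
end

section
/- Let F ⊆ 2^U be a non-empty family of subsets of a finite universe U. If each element u ∈ U is assigned a weight ω(u) chosen uniformly and independently at random from {1, 2, ..., W}, then with probability at least 1 - |U|/W there is a unique set S ∈ F minimizing ω(S) = Σ_{x∈S} ω(x). -/
open Finset

/-- weight of a set under a weight function -/
private def isoWt {U : Type*} [DecidableEq U] {W : ℕ} (ω : U → Fin W) (S : Finset U) : ℕ :=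
  ∑ x ∈ S, ((ω x : ℕ) + 1)

/-- Counting weight functions for which `u` is "ambiguous": at most `W ^ (n-1)`. -/
private lemma iso_bad_card_le {U : Type*} [Fintype U] [DecidableEq U]
    (F : Finset (Finset U)) {W : ℕ} (u : U) :
    (((Finset.univ : Finset (U → Fin W)).filter fun ω =>
      ∃ S ∈ F, ∃ T ∈ F, (∀ S' ∈ F, isoWt ω S ≤ isoWt ω S') ∧
        (∀ S' ∈ F, isoWt ω T ≤ isoWt ω S') ∧ u ∈ S ∧ u ∉ T).card)
      ≤ W ^ (Fintype.card U - 1) := by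
  classical
  set B := ((Finset.univ : Finset (U → Fin W)).filter fun ω =>
      ∃ S ∈ F, ∃ T ∈ F, (∀ S' ∈ F, isoWt ω S ≤ isoWt ω S') ∧
        (∀ S' ∈ F, isoWt ω T ≤ isoWt ω S') ∧ u ∈ S ∧ u ∉ T) with hB
  have hinj : Set.InjOn (fun (ω : U → Fin W) => (fun x : {x : U // x ≠ u} => ω x.1)) ↑B := by
    intro ω₁ h₁ ω₂ h₂ h
    simp only [hB, coe_filter, Set.mem_setOf_eq] at h₁ h₂
    obtain ⟨-, S₁, hS₁, T₁, hT₁, hmin₁, hminT₁, huS₁, huT₁⟩ := h₁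
    obtain ⟨-, S₂, hS₂, T₂, hT₂, hmin₂, hminT₂, huS₂, huT₂⟩ := h₂
    have hoff : ∀ x : U, x ≠ u → ω₁ x = ω₂ x := fun x hx => congrFun h ⟨x, hx⟩
    -- sums over sets avoiding u agree
    have hsum : ∀ T : Finset U, u ∉ T → isoWt ω₁ T = isoWt ω₂ T := by
      intro T hT
      refine Finset.sum_congr rfl fun x hx => ?_
      rw [hoff x (by rintro rfl; exact hT hx)]
    have hsume : ∀ S : Finset U,
        (∑ x ∈ S.erase u, ((ω₁ x : ℕ) + 1)) = ∑ x ∈ S.erase u, ((ω₂ x : ℕ) + 1) := by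
      intro S
      refine Finset.sum_congr rfl fun x hx => ?_
      rw [hoff x (Finset.ne_of_mem_erase hx)]
    have hsplit₁ : ∀ S : Finset U, u ∈ S →
        isoWt ω₁ S = ((ω₁ u : ℕ) + 1) + ∑ x ∈ S.erase u, ((ω₁ x : ℕ) + 1) := by
      intro S hu; exact (Finset.add_sum_erase S _ hu).symm
    have hsplit₂ : ∀ S : Finset U, u ∈ S →
        isoWt ω₂ S = ((ω₂ u : ℕ) + 1) + ∑ x ∈ S.erase u, ((ω₂ x : ℕ) + 1) := by
      intro S hu; exact (Finset.add_sum_erase S _ hu).symm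
    -- e S₁ = e S₂ where e S = sum over erase u (using ω₁)
    have hE1 : (∑ x ∈ S₁.erase u, ((ω₁ x : ℕ) + 1)) ≤ ∑ x ∈ S₂.erase u, ((ω₁ x : ℕ) + 1) := by
      have := hmin₁ S₂ hS₂
      rw [hsplit₁ S₁ huS₁, hsplit₁ S₂ huS₂] at this
      omega
    have hE2 : (∑ x ∈ S₂.erase u, ((ω₂ x : ℕ) + 1)) ≤ ∑ x ∈ S₁.erase u, ((ω₂ x : ℕ) + 1) := by
      have := hmin₂ S₁ hS₁
      rw [hsplit₂ S₂ huS₂, hsplit₂ S₁ huS₁] at this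
      omega
    have hE : (∑ x ∈ S₁.erase u, ((ω₁ x : ℕ) + 1)) = ∑ x ∈ S₂.erase u, ((ω₂ x : ℕ) + 1) := by
      rw [hsume S₂] at hE1
      rw [← hsume S₁] at hE2
      omega
    -- weights of the minimal u-free sets agree
    have hA1 : isoWt ω₁ T₁ ≤ isoWt ω₂ T₂ := by
      rw [← hsum T₂ huT₂]; exact hminT₁ T₂ hT₂
    have hA2 : isoWt ω₂ T₂ ≤ isoWt ω₁ T₁ := by
      rw [hsum T₁ huT₁] at *; exact hminT₂ T₁ hT₁
    have hA : isoWt ω₁ T₁ = isoWt ω₂ T₂ := le_antisymm hA1 hA2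
    -- each minimal set weight equals the minimal u-free weight
    have heq₁ : isoWt ω₁ S₁ = isoWt ω₁ T₁ :=
      le_antisymm (hmin₁ T₁ hT₁) (hminT₁ S₁ hS₁)
    have heq₂ : isoWt ω₂ S₂ = isoWt ω₂ T₂ :=
      le_antisymm (hmin₂ T₂ hT₂) (hminT₂ S₂ hS₂)
    rw [hsplit₁ S₁ huS₁] at heq₁
    rw [hsplit₂ S₂ huS₂] at heq₂
    have huval : (ω₁ u : ℕ) = (ω₂ u : ℕ) := by omega
    funext x
    by_cases hx : x = u
    · subst hx; exact Fin.ext huval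
    · exact hoff x hx
  have hcard := Finset.card_le_card_of_injOn
    (fun (ω : U → Fin W) => (fun x : {x : U // x ≠ u} => ω x.1))
    (fun a _ => Finset.mem_univ _) hinj
  refine hcard.trans ?_
  rw [Finset.card_univ, Fintype.card_fun]
  have : Fintype.card {x : U // x ≠ u} = Fintype.card U - 1 := by
    simp [Fintype.card_subtype_compl, Fintype.card_fin]
  rw [Fintype.card_fin, this]

open Classical in
/-- Isolation Lemma: for a nonempty family `F` of subsets of a finite
universe `U`, the fraction of weight functions `ω : U → {1,…,W}` under which `F` has a
unique minimum-weight member is at least `1 - |U|/W`; stated as a count of such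
weight functions. -/
theorem stmt_9 {U : Type*} [Fintype U] [DecidableEq U] (F : Finset (Finset U))
    (hF : F.Nonempty) (W : ℕ) (hW : 0 < W) :
    (1 - (Fintype.card U : ℝ) / (W : ℝ)) * (W : ℝ) ^ (Fintype.card U) ≤
      (((Finset.univ : Finset (U → Fin W)).filter fun ω : U → Fin W =>
        ∃! S : Finset U, S ∈ F ∧ ∀ S' ∈ F,
          (∑ x ∈ S, ((ω x : ℕ) + 1)) ≤ ∑ x ∈ S', ((ω x : ℕ) + 1)).card : ℝ) := by
  classical
  set n := Fintype.card U with hn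
  set P : (U → Fin W) → Prop := fun ω =>
    ∃! S : Finset U, S ∈ F ∧ ∀ S' ∈ F,
      (∑ x ∈ S, ((ω x : ℕ) + 1)) ≤ ∑ x ∈ S', ((ω x : ℕ) + 1) with hP
  set good := ((Finset.univ : Finset (U → Fin W)).filter fun ω => P ω) with hgood
  set bad := ((Finset.univ : Finset (U → Fin W)).filter fun ω => ¬ P ω) with hbad
  have htotal : good.card + bad.card = W ^ n := by
    rw [hgood, hbad, Finset.card_filter_add_card_filter_not, Finset.card_univ,
      Fintype.card_fun, Fintype.card_fin]
  -- bad functions are covered by the per-element ambiguous sets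
  have hsub : bad ⊆ (Finset.univ : Finset U).biUnion fun u =>
      ((Finset.univ : Finset (U → Fin W)).filter fun ω =>
        ∃ S ∈ F, ∃ T ∈ F, (∀ S' ∈ F, isoWt ω S ≤ isoWt ω S') ∧
          (∀ S' ∈ F, isoWt ω T ≤ isoWt ω S') ∧ u ∈ S ∧ u ∉ T) := by
    intro ω hω
    rw [hbad, Finset.mem_filter] at hω
    obtain ⟨-, hnP⟩ := hω
    obtain ⟨S, hS, hSmin⟩ := Finset.exists_min_image F (isoWt ω) hF
    rw [hP] at hnP
    simp only [ExistsUnique, not_exists, not_and, not_forall] at hnP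
    obtain ⟨T, hTmem, hTS⟩ := hnP S ⟨hS, hSmin⟩
    obtain ⟨hT, hTmin⟩ := hTmem
    have hne : T ≠ S := hTS
    have hdiff : ∃ u, ¬ (u ∈ S ↔ u ∈ T) := by
      by_contra h
      push_neg at h
      exact hne (Finset.ext fun u => (h u).symm)
    obtain ⟨u, hu⟩ := hdiff
    rw [Finset.mem_biUnion]
    refine ⟨u, Finset.mem_univ u, Finset.mem_filter.mpr ⟨Finset.mem_univ _, ?_⟩⟩
    rw [iff_iff_implies_and_implies, not_and_or] at hu
    push_neg at hu
    rcases hu with ⟨huS, huT⟩ | ⟨huT, huS⟩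
    · exact ⟨S, hS, T, hT, hSmin, hTmin, huS, huT⟩
    · exact ⟨T, hT, S, hS, hTmin, hSmin, huT, huS⟩
  have hbadle : bad.card ≤ n * W ^ (n - 1) := by
    calc bad.card ≤ _ := Finset.card_le_card hsub
      _ ≤ ∑ u : U, (((Finset.univ : Finset (U → Fin W)).filter fun ω =>
          ∃ S ∈ F, ∃ T ∈ F, (∀ S' ∈ F, isoWt ω S ≤ isoWt ω S') ∧
            (∀ S' ∈ F, isoWt ω T ≤ isoWt ω S') ∧ u ∈ S ∧ u ∉ T).card) :=
        Finset.card_biUnion_le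
      _ ≤ ∑ _u : U, W ^ (n - 1) :=
        Finset.sum_le_sum fun u _ => iso_bad_card_le F u
      _ = n * W ^ (n - 1) := by rw [Finset.sum_const, Finset.card_univ, smul_eq_mul]
  -- real arithmetic
  have hWR : (0:ℝ) < (W:ℝ) := by exact_mod_cast hW
  have hgr : (good.card : ℝ) = (W:ℝ) ^ n - (bad.card : ℝ) := by
    have := htotal
    have : (good.card : ℝ) + (bad.card : ℝ) = (W:ℝ) ^ n := by exact_mod_cast this
    linarith
  rw [hgr]
  have hb : (bad.card : ℝ) ≤ (n : ℝ) * (W:ℝ) ^ (n - 1) := by exact_mod_cast hbadle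
  have hkey : (n : ℝ) * (W:ℝ) ^ (n - 1) ≤ ((n : ℝ) / (W:ℝ)) * (W:ℝ) ^ n := by
    rcases Nat.eq_zero_or_pos n with h0 | hpos
    · simp [h0]
    · have : (W:ℝ) ^ n = (W:ℝ) ^ (n - 1) * (W:ℝ) := by
        rw [← pow_succ]
        congr 1
        omega
      have h2 : ((n:ℝ) / (W:ℝ)) * ((W:ℝ) ^ (n-1) * (W:ℝ)) = (n:ℝ) * (W:ℝ) ^ (n-1) := by
        field_simp
      rw [this, h2]
  nlinarith [pow_pos hWR n]
end

section
/- Subdividing every edge of a graph G yields a graph G' such that G has a feedback vertex set of size k if and only if G' has a feedback vertex set of size k that is an independent set and avoids all subdivision vertices. -/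
/-- The graph obtained from `G` by subdividing every edge: vertices are the original
vertices together with one subdivision vertex per edge, and each subdivision vertex is
adjacent exactly to the two endpoints of its edge. -/
def subdivide {V : Type*} (G : SimpleGraph V) : SimpleGraph (V ⊕ G.edgeSet) where
  Adj x y :=
    match x, y with
    | Sum.inl v, Sum.inr e => v ∈ (e : Sym2 V)
    | Sum.inr e, Sum.inl v => v ∈ (e : Sym2 V)
    | _, _ => False
  symm := ⟨by rintro (v | e) (w | f) h <;> simp_all⟩
  loopless := ⟨by rintro (v | e) h <;> simp_all⟩

namespace SubdivAux

open SimpleGraph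

variable {V : Type*} [DecidableEq V]

abbrev sdA (S : Finset V) : Set V := (↑S)ᶜ

abbrev sdB (G : SimpleGraph V) (S : Finset V) : Set (V ⊕ G.edgeSet) :=
  (↑(S.image Sum.inl : Finset (V ⊕ G.edgeSet)))ᶜ

def fA (G : SimpleGraph V) (S : Finset V) (a : sdA S) : sdB G S :=
  ⟨Sum.inl a.1, fun hmem => a.2 (by simpa using hmem)⟩

def gE (G : SimpleGraph V) (S : Finset V) (e : G.edgeSet) : sdB G S :=
  ⟨Sum.inr e, by simp⟩

lemma fA_injective (G : SimpleGraph V) (S : Finset V) : Function.Injective (fA G S) :=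
  fun a b h => Subtype.ext (Sum.inl_injective (congrArg Subtype.val h))

lemma proj_aux (G : SimpleGraph V) (S : Finset V) :
    ∀ (n : ℕ) (a b : sdA S) (p : ((subdivide G).induce (sdB G S)).Walk (fA G S a) (fA G S b)),
    p.IsPath → p.length ≤ n →
    ∃ q : (G.induce (sdA S)).Walk a b, q.IsPath ∧
      (∀ x ∈ q.support, fA G S x ∈ p.support) ∧
      (∀ (e' : G.edgeSet), ∀ d ∈ q.edges, (e' : Sym2 V) = d.map Subtype.val →
        gE G S e' ∈ p.support) := by
  intro n
  induction n with
  | zero =>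
    intro a b p hp hl
    have hnil : p.Nil := Walk.nil_iff_length_eq.mpr (Nat.le_zero.mp hl)
    obtain rfl : a = b := fA_injective G S hnil.eq
    exact ⟨Walk.nil, Walk.IsPath.nil, by simp, by simp⟩
  | succ n ih =>
    intro a b p hp hl
    by_cases hnil : p.Nil
    · obtain rfl : a = b := fA_injective G S hnil.eq
      exact ⟨Walk.nil, Walk.IsPath.nil, by simp, by simp⟩
    · obtain ⟨y, h1, p1, rfl⟩ := Walk.not_nil_iff.mp hnil
      obtain ⟨(w | e), hy⟩ := y
      · exact absurd h1 (by simp [subdivide, fA])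
      · have hae : (a : V) ∈ (e : Sym2 V) := by simpa [subdivide, fA] using h1
        have hnil1 : ¬ p1.Nil := by
          intro h
          have := congrArg Subtype.val h.eq
          simp [fA] at this
        obtain ⟨z, h2, p2, rfl⟩ := Walk.not_nil_iff.mp hnil1
        obtain ⟨(w | e2), hz⟩ := z
        · -- z = inl w
          have hwe : w ∈ (e : Sym2 V) := by simpa [subdivide] using h2
          have hwA : w ∈ sdA S := by simpa using hz
          set c : (sdA S : Set V) := ⟨w, hwA⟩ with hc
          have hz2 : (⟨Sum.inl w, hz⟩ : sdB G S) = fA G S c := Subtype.ext rfl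
          rw [Walk.cons_isPath_iff] at hp
          obtain ⟨hp1, hfa⟩ := hp
          rw [Walk.cons_isPath_iff] at hp1
          obtain ⟨hp2, hine⟩ := hp1
          have hac : a ≠ c := by
            rintro rfl
            apply hfa
            rw [Walk.support_cons]
            exact List.mem_cons_of_mem _ p2.start_mem_support
          have hane : (a : V) ≠ w := fun h => hac (Subtype.ext h)
          have hE : (e : Sym2 V) = s((a : V), w) := (Sym2.mem_and_mem_iff hane).mp ⟨hae, hwe⟩
          have hadj : G.Adj (a : V) w := by
            rw [← SimpleGraph.mem_edgeSet, ← hE]; exact e.2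
          have hlen : p2.length ≤ n := by
            simp only [Walk.length_cons] at hl; omega
          obtain ⟨q2, hq2p, hq2s, hq2e⟩ := ih c b p2 hp2 hlen
          have hadj' : (G.induce (sdA S)).Adj a c := hadj
          refine ⟨Walk.cons hadj' q2, ?_, ?_, ?_⟩
          · rw [Walk.cons_isPath_iff]
            refine ⟨hq2p, fun hmem => ?_⟩
            apply hfa
            rw [Walk.support_cons]
            exact List.mem_cons_of_mem _ (hq2s a hmem)
          · intro x hx
            rw [Walk.support_cons, List.mem_cons] at hx
            rcases hx with rfl | hx
            · exact Walk.start_mem_support _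
            · rw [Walk.support_cons, Walk.support_cons]
              exact List.mem_cons_of_mem _ (List.mem_cons_of_mem _ (hq2s x hx))
          · intro e' d hd hde
            rw [Walk.edges_cons, List.mem_cons] at hd
            rcases hd with rfl | hd
            · have he2 : (e' : Sym2 V) = s((a : V), w) := by
                rw [hde, Sym2.map_pair_eq]
              have he'e : e' = e := Subtype.ext (he2.trans hE.symm)
              subst he'e
              have : gE G S e' = (⟨Sum.inr e', hy⟩ : sdB G S) := Subtype.ext rfl
              rw [this, Walk.support_cons]
              exact List.mem_cons_of_mem _ (Walk.start_mem_support _)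
            · rw [Walk.support_cons, Walk.support_cons]
              exact List.mem_cons_of_mem _ (List.mem_cons_of_mem _ (hq2e e' d hd hde))
        · exact absurd h2 (by simp [subdivide])

lemma lift_aux (G : SimpleGraph V) (S : Finset V) :
    ∀ (a b : sdA S) (p : (G.induce (sdA S)).Walk a b), p.IsPath →
    ∃ q : ((subdivide G).induce (sdB G S)).Walk (fA G S a) (fA G S b), q.IsPath ∧
      ∀ x ∈ q.support, (∃ y ∈ p.support, x = fA G S y) ∨
        ∃ e' : G.edgeSet, x = gE G S e' ∧
          (e' : Sym2 V) ∈ p.edges.map (Sym2.map Subtype.val) := by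
  intro a b p
  induction p with
  | nil =>
    intro _
    refine ⟨Walk.nil, Walk.IsPath.nil, ?_⟩
    intro x hx
    rw [Walk.support_nil, List.mem_singleton] at hx
    exact Or.inl ⟨_, Walk.start_mem_support _, hx⟩
  | @cons u v w h p ih =>
    intro hp
    rw [Walk.cons_isPath_iff] at hp
    obtain ⟨hp1, hus⟩ := hp
    obtain ⟨q, hqp, hqs⟩ := ih hp1
    have hadj : G.Adj (u : V) (v : V) := h
    set e : G.edgeSet := ⟨s((u : V), (v : V)), hadj⟩ with he
    have h1 : ((subdivide G).induce (sdB G S)).Adj (fA G S u) (gE G S e) := by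
      simp [subdivide, fA, gE, he]
    have h2 : ((subdivide G).induce (sdB G S)).Adj (gE G S e) (fA G S v) := by
      simp [subdivide, fA, gE, he]
    have hgne : gE G S e ∉ q.support := by
      intro hmem
      rcases hqs _ hmem with ⟨y, hy, hEq⟩ | ⟨e', hEq, hmemE⟩
      · exact absurd (congrArg Subtype.val hEq) (by simp [fA, gE])
      · have he'e : e = e' := Subtype.ext (by
          have := congrArg Subtype.val hEq
          simp [gE] at this
          rw [this])
        subst he'e
        obtain ⟨d, hd, hmap⟩ := List.mem_map.mp hmemE
        have hds : d = s(u, v) := Sym2.map.injective Subtype.val_injective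
          (by rw [hmap]; simp [Sym2.map_pair_eq, he])
        rw [hds] at hd
        exact hus (Walk.fst_mem_support_of_mem_edges p hd)
    have hfu : fA G S u ∉ (Walk.cons h2 q).support := by
      rw [Walk.support_cons, List.mem_cons]
      rintro (hEq | hmem)
      · exact absurd (congrArg Subtype.val hEq) (by simp [fA, gE])
      · rcases hqs _ hmem with ⟨y, hy, hEq⟩ | ⟨e', hEq, _⟩
        · obtain rfl := fA_injective G S hEq
          exact hus hy
        · exact absurd (congrArg Subtype.val hEq) (by simp [fA, gE])
    refine ⟨Walk.cons h1 (Walk.cons h2 q), ?_, ?_⟩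
    · rw [Walk.cons_isPath_iff, Walk.cons_isPath_iff]
      exact ⟨⟨hqp, hgne⟩, hfu⟩
    · intro x hx
      rw [Walk.support_cons, Walk.support_cons, List.mem_cons, List.mem_cons] at hx
      rcases hx with rfl | rfl | hx
      · exact Or.inl ⟨u, Walk.start_mem_support _, rfl⟩
      · refine Or.inr ⟨e, rfl, ?_⟩
        rw [Walk.edges_cons, List.map_cons, List.mem_cons]
        exact Or.inl (by simp [Sym2.map_pair_eq, he])
      · rcases hqs x hx with ⟨y, hy, hEq⟩ | ⟨e', hEq, hm⟩
        · exact Or.inl ⟨y, by rw [Walk.support_cons]; exact List.mem_cons_of_mem _ hy, hEq⟩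
        · refine Or.inr ⟨e', hEq, ?_⟩
          rw [Walk.edges_cons, List.map_cons, List.mem_cons]
          exact Or.inr hm

lemma key (G : SimpleGraph V) (S : Finset V) :
    (G.induce (sdA S)).IsAcyclic ↔ ((subdivide G).induce (sdB G S)).IsAcyclic := by
  constructor
  · -- G acyclic → subdivided acyclic
    intro hG x c hc
    have hnil : ¬ c.Nil := by
      intro h
      rw [Walk.nil_iff_length_eq] at h
      have := hc.three_le_length
      omega
    -- find an inl vertex on the cycle
    obtain ⟨a, ha⟩ : ∃ a : (sdA S : Set V), fA G S a ∈ c.support := by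
      obtain ⟨y, h1, p1, rfl⟩ := Walk.not_nil_iff.mp hnil
      obtain ⟨(v | e), hx⟩ := x
      · have hvA : v ∈ sdA S := by simpa using hx
        refine ⟨⟨v, hvA⟩, ?_⟩
        have : (⟨Sum.inl v, hx⟩ : sdB G S) = fA G S ⟨v, hvA⟩ := Subtype.ext rfl
        rw [← this]
        exact Walk.start_mem_support _
      · obtain ⟨(w | e2), hy⟩ := y
        · have hwA : w ∈ sdA S := by simpa using hy
          refine ⟨⟨w, hwA⟩, ?_⟩
          have : (⟨Sum.inl w, hy⟩ : sdB G S) = fA G S ⟨w, hwA⟩ := Subtype.ext rfl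
          rw [← this, Walk.support_cons]
          exact List.mem_cons_of_mem _ p1.start_mem_support
        · exact absurd h1 (by simp [subdivide])
    have hc2 : (c.rotate _ ha).IsCycle := hc.rotate ha
    have hnil2 : ¬ (c.rotate _ ha).Nil := by
      intro h
      rw [Walk.nil_iff_length_eq] at h
      have := hc2.three_le_length
      omega
    obtain ⟨y, h1, p1, heq⟩ := Walk.not_nil_iff.mp hnil2
    rw [heq] at hc2
    obtain ⟨(w | e), hy⟩ := y
    · exact absurd h1 (by simp [subdivide, fA])
    · have hae : (a : V) ∈ (e : Sym2 V) := by simpa [subdivide, fA] using h1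
      rw [Walk.cons_isCycle_iff] at hc2
      obtain ⟨hp1path, hedge1⟩ := hc2
      have hnil1 : ¬ p1.Nil := by
        intro h
        have := congrArg Subtype.val h.eq
        simp [fA] at this
      obtain ⟨z, h2, p2, heq2⟩ := Walk.not_nil_iff.mp hnil1
      rw [heq2] at hp1path hedge1
      obtain ⟨(w | e2), hz⟩ := z
      · -- third vertex is inl w
        have hwe : w ∈ (e : Sym2 V) := by simpa [subdivide] using h2
        have hwA : w ∈ sdA S := by simpa using hz
        set cc : (sdA S : Set V) := ⟨w, hwA⟩ with hcc
        rw [Walk.cons_isPath_iff] at hp1path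
        obtain ⟨hp2, hinr⟩ := hp1path
        have haw : (a : V) ≠ w := by
          intro hEq
          have hzfa : (⟨Sum.inl w, hz⟩ : sdB G S) = fA G S a := Subtype.ext (by simp [fA, hEq])
          have hnilp2 : p2.copy hzfa rfl = SimpleGraph.Walk.nil := by
            rw [← Walk.isPath_iff_eq_nil, Walk.isPath_copy]
            exact hp2
          have hedges : p2.edges = [] := by
            have := congrArg SimpleGraph.Walk.edges hnilp2
            simpa [Walk.edges_copy] using this
          apply hedge1
          rw [Walk.edges_cons, hedges, List.mem_singleton, hzfa]
          exact Sym2.eq_swap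
        have hE : (e : Sym2 V) = s((a : V), w) := (Sym2.mem_and_mem_iff haw).mp ⟨hae, hwe⟩
        have hadj : G.Adj (a : V) w := by
          rw [← SimpleGraph.mem_edgeSet, ← hE]; exact e.2
        obtain ⟨q, hqp, hqs, hqe⟩ := proj_aux G S p2.length cc a p2 hp2 le_rfl
        have hadj' : (G.induce (sdA S)).Adj a cc := hadj
        apply hG (Walk.cons hadj' q)
        rw [Walk.cons_isCycle_iff]
        refine ⟨hqp, fun hmem => ?_⟩
        have hgmem := hqe e s(a, cc) hmem (by rw [hE, Sym2.map_pair_eq])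
        exact hinr hgmem
      · exact absurd h2 (by simp [subdivide])
  · -- subdivided acyclic → G acyclic
    intro hG' a c hc
    have hnil : ¬ c.Nil := by
      intro h
      rw [Walk.nil_iff_length_eq] at h
      have := hc.three_le_length
      omega
    obtain ⟨d, h, p, rfl⟩ := Walk.not_nil_iff.mp hnil
    rw [Walk.cons_isCycle_iff] at hc
    obtain ⟨hpPath, hedge⟩ := hc
    obtain ⟨q, hqp, hqs⟩ := lift_aux G S d a p hpPath
    have hadj : G.Adj (a : V) (d : V) := h
    set e : G.edgeSet := ⟨s((a : V), (d : V)), hadj⟩ with he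
    have h1 : ((subdivide G).induce (sdB G S)).Adj (fA G S a) (gE G S e) := by
      simp [subdivide, fA, gE, he]
    have h2 : ((subdivide G).induce (sdB G S)).Adj (gE G S e) (fA G S d) := by
      simp [subdivide, fA, gE, he]
    have hgne : gE G S e ∉ q.support := by
      intro hmem
      rcases hqs _ hmem with ⟨y, hy, hEq⟩ | ⟨e', hEq, hmemE⟩
      · exact absurd (congrArg Subtype.val hEq) (by simp [fA, gE])
      · have he'e : e = e' := Subtype.ext (by
          have := congrArg Subtype.val hEq
          simp [gE] at this
          rw [this])
        subst he'e
        obtain ⟨dd, hd, hmap⟩ := List.mem_map.mp hmemE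
        have hds : dd = s(a, d) := Sym2.map.injective Subtype.val_injective
          (by rw [hmap]; simp [Sym2.map_pair_eq, he])
        rw [hds] at hd
        exact hedge hd
    apply hG' (Walk.cons h1 (Walk.cons h2 q))
    rw [Walk.cons_isCycle_iff]
    constructor
    · rw [Walk.cons_isPath_iff]
      exact ⟨hqp, hgne⟩
    · rw [Walk.edges_cons, List.mem_cons]
      rintro (hEq | hmem)
      · rw [Sym2.eq_iff] at hEq
        rcases hEq with ⟨h3, -⟩ | ⟨h3, -⟩
        · exact absurd (congrArg Subtype.val h3) (by simp [fA, gE])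
        · obtain rfl := fA_injective G S h3
          exact hadj.ne rfl
      · exact hgne (Walk.snd_mem_support_of_mem_edges q hmem)

end SubdivAux

/-- `G` has a feedback vertex set of size `k` iff the subdivided graph
`G'` has a feedback vertex set of size `k` that is an independent set and avoids all
subdivision vertices. -/
theorem stmt_12 {V : Type*} [Fintype V] [DecidableEq V] (G : SimpleGraph V) (k : ℕ) :
    (∃ S : Finset V, S.card ≤ k ∧ (G.induce ((↑S)ᶜ : Set V)).IsAcyclic) ↔
    (∃ S' : Finset (V ⊕ G.edgeSet), S'.card ≤ k ∧
      (∀ u ∈ S', ∀ v ∈ S', ¬ (subdivide G).Adj u v) ∧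
      (∀ e : G.edgeSet, Sum.inr e ∉ S') ∧
      ((subdivide G).induce ((↑S')ᶜ : Set (V ⊕ G.edgeSet))).IsAcyclic) := by
  classical
  constructor
  · rintro ⟨S, hcard, hacyc⟩
    refine ⟨S.image Sum.inl, le_trans Finset.card_image_le hcard, ?_, ?_, ?_⟩
    · intro u hu v hv
      simp only [Finset.mem_image] at hu hv
      obtain ⟨x, -, rfl⟩ := hu
      obtain ⟨y, -, rfl⟩ := hv
      simp [subdivide]
    · intro e
      simp
    · exact (SubdivAux.key G S).mp hacyc
  · rintro ⟨S', hcard, -, hinr, hacyc⟩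
    have himg : (S'.preimage Sum.inl Sum.inl_injective.injOn).image Sum.inl = S' := by
      ext x
      cases x with
      | inl v => simp [Finset.mem_preimage]
      | inr e => simp [hinr e]
    refine ⟨S'.preimage Sum.inl Sum.inl_injective.injOn, ?_, ?_⟩
    · calc (S'.preimage Sum.inl Sum.inl_injective.injOn).card
          = ((S'.preimage Sum.inl Sum.inl_injective.injOn).image Sum.inl).card :=
            (Finset.card_image_of_injective _ Sum.inl_injective).symm
        _ = S'.card := by rw [himg]
        _ ≤ k := hcard
    · rw [← himg] at hacyc
      exact (SubdivAux.key G _).mpr hacyc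
end

section
/- Let G be a graph, F ⊆ V(G) with G - F an ℓ-forest, and let G' be obtained from G by subdividing every edge, with R the set of subdivision vertices. Then (G, k, ℓ) has a vertex set S of size at most k with G - S an ℓ-forest if and only if (G', k, ℓ) has a vertex set S' of size at most k that is independent in G', disjoint from R, and with G' - S' an ℓ-forest. -/
open SimpleGraph

namespace Stmt13Aux

variable {α β V : Type*}

lemma nodup_sum {l : List (α ⊕ β)} (h1 : (l.filterMap Sum.getLeft?).Nodup)
    (h2 : (l.filterMap Sum.getRight?).Nodup) : l.Nodup := by
  induction l with
  | nil => simp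
  | cons x l ih =>
    rcases x with a | b
    · simp only [List.filterMap_cons] at h1
      simp only [Sum.getLeft?] at h1
      rw [List.nodup_cons] at h1 ⊢
      refine ⟨fun hx => h1.1 ?_, ih h1.2 (by simpa [List.filterMap_cons, Sum.getLeft?, Sum.getRight?] using h2)⟩
      · exact List.mem_filterMap.2 ⟨Sum.inl a, hx, rfl⟩
    · simp only [List.filterMap_cons] at h2
      simp only [Sum.getRight?] at h2
      rw [List.nodup_cons] at h2 ⊢
      refine ⟨fun hx => h2.1 ?_, ih (by simpa [List.filterMap_cons, Sum.getLeft?] using h1) h2.2⟩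
      · exact List.mem_filterMap.2 ⟨Sum.inr b, hx, rfl⟩

/-- spanning restriction of `K` to `s` minus edge set `t`. -/
def Rg (K : SimpleGraph V) (s : Set V) (t : Finset (Sym2 V)) : SimpleGraph V where
  Adj u v := K.Adj u v ∧ u ∈ s ∧ v ∈ s ∧ s(u, v) ∉ t
  symm := ⟨by
    rintro u v ⟨h, hu, hv, ht⟩
    exact ⟨h.symm, hv, hu, by rwa [Sym2.eq_swap]⟩⟩
  loopless := ⟨fun v h => h.1.ne rfl⟩

lemma rg_le (K : SimpleGraph V) (s : Set V) (t : Finset (Sym2 V)) : Rg K s t ≤ K :=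
  fun _ _ h => h.1

/-- lifting walks into induced subgraphs -/
lemma walk_lift {H : SimpleGraph V} {s : Set V} (hs : ∀ u v, H.Adj u v → u ∈ s) :
    ∀ {u v : V} (w : H.Walk u v) (hu : u ∈ s) (hv : v ∈ s),
      ∃ w' : (H.induce s).Walk ⟨u, hu⟩ ⟨v, hv⟩,
        w'.map (SimpleGraph.Embedding.induce s).toHom = w := by
  intro u v w
  induction w with
  | nil => intro hu hv; exact ⟨.nil, rfl⟩
  | @cons u x v h w ih =>
    intro hu hv
    have hx : x ∈ s := hs x u h.symm
    obtain ⟨w', hw'⟩ := ih hx hv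
    refine ⟨.cons (by exact h : (H.induce s).Adj ⟨u, hu⟩ ⟨x, hx⟩) w', ?_⟩
    subst hw'; rfl

lemma acyclic_induce_iff {H : SimpleGraph V} {s : Set V} (hs : ∀ u v, H.Adj u v → u ∈ s) :
    (H.induce s).IsAcyclic ↔ H.IsAcyclic := by
  constructor
  · intro hA u c hc
    have hu : u ∈ s := by
      cases c with
      | nil => exact absurd rfl hc.ne_nil
      | cons h w => exact hs _ _ h
    obtain ⟨c', hc'⟩ := walk_lift hs c hu hu
    refine hA c' ?_
    have hinj : Function.Injective (SimpleGraph.Embedding.induce (G := H) s).toHom :=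
      (SimpleGraph.Embedding.induce (G := H) s).injective
    rw [← Walk.map_isCycle_iff_of_injective (p := c') hinj, hc']
    exact hc
  · intro hA u c hc
    have hinj : Function.Injective (SimpleGraph.Embedding.induce (G := H) s).toHom :=
      (SimpleGraph.Embedding.induce (G := H) s).injective
    exact hA _ (hc.map hinj)

lemma isLForest_induce_iff [Fintype V] (K : SimpleGraph V) (s : Set V) (ℓ : ℕ) :
    IsLForest (K.induce s) ℓ ↔
      ∃ t : Finset (Sym2 V), ↑t ⊆ K.edgeSet ∧ t.card ≤ ℓ ∧ (Rg K s t).IsAcyclic := by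
  classical
  have hsupp : ∀ (t : Finset (Sym2 V)) (u v : V), (Rg K s t).Adj u v → u ∈ s :=
    fun t u v h => h.2.1
  constructor
  · rintro ⟨t, hte, htc, hta⟩
    refine ⟨t.image (Sym2.map Subtype.val), ?_, le_trans (Finset.card_image_le) htc, ?_⟩
    · intro p hp
      simp only [Finset.coe_image, Set.mem_image, Finset.mem_coe] at hp
      obtain ⟨q, hq, rfl⟩ := hp
      have := hte hq
      induction q with
      | _ a b =>
        rw [Sym2.map_pair_eq]
        exact (SimpleGraph.mem_edgeSet _).2 ((K.induce s).mem_edgeSet.1 this)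
    · rw [← acyclic_induce_iff (hsupp _)]
      have : (Rg K s (t.image (Sym2.map Subtype.val))).induce s
          = (K.induce s).deleteEdges ↑t := by
        ext a b
        simp only [comap_adj, Function.Embedding.coe_subtype, deleteEdges_adj]
        show (K.Adj ↑a ↑b ∧ _ ∧ _ ∧ _) ↔ _
        constructor
        · rintro ⟨h, -, -, hne⟩
          refine ⟨h, fun hmem => hne ?_⟩
          rw [show s(((a : V)), ((b : V))) = Sym2.map Subtype.val s(a, b) from
            (Sym2.map_pair_eq _ _ _).symm]
          exact Finset.mem_image_of_mem _ hmem
        · rintro ⟨h, hne⟩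
          refine ⟨h, a.2, b.2, fun hmem => hne ?_⟩
          rw [show s(((a : V)), ((b : V))) = Sym2.map Subtype.val s(a, b) from
            (Sym2.map_pair_eq _ _ _).symm] at hmem
          obtain ⟨q, hq, hqe⟩ := Finset.mem_image.1 hmem
          rwa [Sym2.map.injective Subtype.val_injective hqe] at hq
      rw [this]
      exact hta
  · rintro ⟨t, hte, htc, hta⟩
    set t' : Finset (Sym2 s) := (Finset.univ : Finset (Sym2 s)).filter
        (fun p => p ∈ (K.induce s).edgeSet ∧ Sym2.map Subtype.val p ∈ t) with ht'
    refine ⟨t', ?_, ?_, ?_⟩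
    · intro p hp
      simp only [ht', Finset.coe_filter, Set.mem_setOf_eq, Finset.mem_univ, true_and] at hp
      exact hp.1
    · refine le_trans (Finset.card_le_card_of_injOn (Sym2.map Subtype.val) ?_ ?_) htc
      · intro p hp
        simp only [ht', Finset.mem_coe, Finset.mem_filter, Finset.mem_univ, true_and] at hp
        exact hp.2
      · exact fun p _ q _ h => Sym2.map.injective Subtype.val_injective h
    · have : (K.induce s).deleteEdges ↑t' = (Rg K s t).induce s := by
        ext a b
        simp only [ht', comap_adj, Function.Embedding.coe_subtype, deleteEdges_adj,
          Finset.coe_filter, Set.mem_setOf_eq, Finset.mem_coe, Finset.mem_filter,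
          Finset.mem_univ, true_and]
        show (K.Adj ↑a ↑b ∧ _) ↔ (K.Adj ↑a ↑b ∧ _ ∧ _ ∧ _)
        constructor
        · rintro ⟨h, hne⟩
          refine ⟨h, a.2, b.2, fun hmem => hne ⟨?_, ?_⟩⟩
          · exact (K.induce s).mem_edgeSet.2 h
          · rwa [Sym2.map_pair_eq]
        · rintro ⟨h, -, -, hne⟩
          refine ⟨h, fun hmem => hne ?_⟩
          rw [← Sym2.map_pair_eq Subtype.val a b]
          exact hmem.2
      rw [this]
      exact (acyclic_induce_iff (hsupp t)).2 hta

variable {G : SimpleGraph V} (B : SimpleGraph (V ⊕ G.edgeSet))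

def Ag (B : SimpleGraph (V ⊕ G.edgeSet)) : SimpleGraph V where
  Adj u v := ∃ e : G.edgeSet, (e : Sym2 V) = s(u, v) ∧
    B.Adj (Sum.inl u) (Sum.inr e) ∧ B.Adj (Sum.inr e) (Sum.inl v)
  symm := ⟨by
    rintro u v ⟨e, he, h1, h2⟩
    exact ⟨e, by rw [he, Sym2.eq_swap], h2.symm, h1.symm⟩⟩
  loopless := ⟨by
    rintro v ⟨e, he, h1, h2⟩
    have := e.2
    rw [he] at this
    exact G.loopless.irrefl v this⟩

lemma lift_walk : ∀ {u v : V} (w : (Ag B).Walk u v),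
    ∃ w2 : B.Walk (Sum.inl u) (Sum.inl v),
      w2.length = 2 * w.length ∧
      w2.support.tail.filterMap Sum.getLeft? = w.support.tail ∧
      (w2.support.tail.filterMap Sum.getRight?).map Subtype.val = w.edges ∧
      (∀ p ∈ w2.edges, ∃ (a : V) (e : G.edgeSet),
        p = s(Sum.inl a, Sum.inr e) ∧ (e : Sym2 V) ∈ w.edges) ∧
      (w.edges.Nodup → w2.edges.Nodup) := by
  intro u v w
  induction w with
  | nil => exact ⟨.nil, by simp, by simp, by simp, by simp, by simp⟩
  | @cons u x v h w ih =>
    obtain ⟨e, he, h1, h2⟩ := id h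
    obtain ⟨w2, hlen, hsl, hsr, hch, hnd⟩ := ih
    have hGadj : G.Adj u x := by
      have := e.2; rw [he] at this; exact this
    refine ⟨.cons h1 (.cons h2 w2), ?_, ?_, ?_, ?_, ?_⟩
    · simp [hlen]; ring
    · simp only [Walk.support_cons, List.tail_cons, List.filterMap_cons]
      rw [Walk.support_eq_cons w2, List.filterMap_cons]
      simp only [Sum.getLeft?]
      rw [hsl]
      exact (Walk.support_eq_cons w).symm
    · simp only [Walk.support_cons, List.tail_cons, List.filterMap_cons]
      rw [Walk.support_eq_cons w2, List.filterMap_cons]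
      simp only [Sum.getRight?, List.map_cons, Walk.edges_cons]
      rw [hsr, he]
    · intro p hp
      simp only [Walk.edges_cons, List.mem_cons] at hp
      rcases hp with rfl | rfl | hp
      · exact ⟨u, e, rfl, by simp [he]⟩
      · exact ⟨x, e, Sym2.eq_swap, by simp [he]⟩
      · obtain ⟨a, e', hpe, hmem⟩ := hch p hp
        exact ⟨a, e', hpe, by simp [hmem]⟩
    · intro hnodup
      simp only [Walk.edges_cons, List.nodup_cons] at hnodup ⊢
      obtain ⟨hne, hnodup⟩ := hnodup
      have hE1 : s(Sum.inl u, Sum.inr e) ∉ w2.edges := by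
        intro hmem
        obtain ⟨a, e', hpe, hmem'⟩ := hch _ hmem
        rw [Sym2.eq_iff] at hpe
        rcases hpe with ⟨ha, hee⟩ | ⟨hae, _⟩
        · obtain rfl : e = e' := Sum.inr.inj hee
          rw [he] at hmem'
          exact hne hmem'
        · exact absurd hae (by simp)
      have hE2 : s(Sum.inr e, Sum.inl x) ∉ w2.edges := by
        intro hmem
        obtain ⟨a, e', hpe, hmem'⟩ := hch _ hmem
        rw [Sym2.eq_iff] at hpe
        rcases hpe with ⟨hae, _⟩ | ⟨hee, _⟩
        · exact absurd hae (by simp)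
        · obtain rfl : e = e' := Sum.inr.inj hee
          rw [he] at hmem'
          exact hne hmem'
      have hE12 : s(Sum.inl u, Sum.inr e) ≠ s(Sum.inr e, Sum.inl x) := by
        intro hq
        rw [Sym2.eq_iff] at hq
        rcases hq with ⟨hae, -⟩ | ⟨hux, -⟩
        · exact absurd hae (by simp)
        · exact hGadj.ne (Sum.inl.inj hux)
      exact ⟨by simp [hE1, hE2, hE12], hE2, hnd hnodup⟩

lemma subd_adj_inl_inl {u v : V} (h : subdivide G |>.Adj (Sum.inl u) (Sum.inl v)) : False := h

lemma subd_adj_inr_inr {e f : G.edgeSet} (h : subdivide G |>.Adj (Sum.inr e) (Sum.inr f)) :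
    False := h

lemma subd_adj_mem {u : V} {e : G.edgeSet} (h : subdivide G |>.Adj (Sum.inl u) (Sum.inr e)) :
    u ∈ (e : Sym2 V) := h

lemma proj_walk (hB : B ≤ subdivide G) : ∀ (n : ℕ) {u v : V}
    (w : B.Walk (Sum.inl u) (Sum.inl v)), w.length = n → w.IsTrail →
    ∃ w' : (Ag B).Walk u v,
      2 * w'.length = w.length ∧
      w'.support = w.support.filterMap Sum.getLeft? ∧
      (∀ p ∈ w'.edges, ∃ (a b : V) (e : G.edgeSet), p = s(a, b) ∧ (e : Sym2 V) = s(a, b) ∧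
        s(Sum.inl a, Sum.inr e) ∈ w.edges ∧ s(Sum.inl b, Sum.inr e) ∈ w.edges) ∧
      w'.edges.Nodup := by
  intro n
  induction n using Nat.strong_induction_on with
  | _ n ih =>
    intro u v w hn ht
    cases w with
    | nil => exact ⟨.nil, by simp, by simp, by simp, by simp⟩
    | @cons _ y _ h₁ w₁ =>
      cases y with
      | inl y => exact absurd (hB h₁) (subd_adj_inl_inl)
      | inr e =>
        cases w₁ with
        | @cons _ z _ h₂ w₂ =>
          cases z with
          | inr f => exact absurd (hB h₂) (subd_adj_inr_inr)
          | inl u' =>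
            have hu : u ∈ (e : Sym2 V) := subd_adj_mem (hB h₁)
            have hu' : u' ∈ (e : Sym2 V) := subd_adj_mem ((hB h₂).symm)
            have hedges : (Walk.cons h₁ (Walk.cons h₂ w₂)).edges
                = s(Sum.inl u, Sum.inr e) :: s(Sum.inr e, Sum.inl u') :: w₂.edges := by
              simp
            have htn := ht.edges_nodup
            rw [hedges, List.nodup_cons, List.nodup_cons] at htn
            obtain ⟨hE1, hE2, hw2nd⟩ := htn
            have hne : u ≠ u' := by
              rintro rfl
              exact hE1 (by rw [Sym2.eq_swap]; exact List.mem_cons_self)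
            have he : (e : Sym2 V) = s(u, u') := (Sym2.mem_and_mem_iff hne).1 ⟨hu, hu'⟩
            have hA : (Ag B).Adj u u' := ⟨e, he, h₁, (h₂ : B.Adj (Sum.inr e) (Sum.inl u'))⟩
            have hlen : w₂.length < n := by simp at hn; omega
            obtain ⟨w₂', hl, hs, hch, hnd⟩ := ih w₂.length hlen w₂ rfl
              (ht.of_cons.of_cons)
            refine ⟨.cons hA w₂', ?_, ?_, ?_, ?_⟩
            · simp at hn ⊢; omega
            · simp only [Walk.support_cons, List.filterMap_cons, Sum.getLeft?]
              rw [hs]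
            · intro p hp
              simp only [Walk.edges_cons, List.mem_cons] at hp
              rcases hp with rfl | hp
              · refine ⟨u, u', e, rfl, he, ?_, ?_⟩
                · rw [hedges]; exact List.mem_cons_self
                · rw [hedges]
                  refine List.mem_cons_of_mem _ ?_
                  rw [Sym2.eq_swap]
                  exact List.mem_cons_self
              · obtain ⟨a, b, e₂, hpe, he₂, hm1, hm2⟩ := hch p hp
                refine ⟨a, b, e₂, hpe, he₂, ?_, ?_⟩ <;>
                  · rw [hedges]
                    exact List.mem_cons_of_mem _ (List.mem_cons_of_mem _ (by assumption))
            · simp only [Walk.edges_cons]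
              rw [List.nodup_cons]
              refine ⟨?_, hnd⟩
              intro hmem
              obtain ⟨a, b, e₂, hpe, he₂, hm1, hm2⟩ := hch _ hmem
              have hee : e₂ = e := by
                apply Subtype.ext
                rw [he₂, ← hpe, he]
              subst hee
              rw [Sym2.eq_iff] at hpe
              rcases hpe with ⟨rfl, rfl⟩ | ⟨rfl, rfl⟩
              · exact hE1 (List.mem_cons_of_mem _ hm1)
              · rw [Sym2.eq_swap] at hm1
                exact hE2 hm1

lemma getLeft?_pinj : ∀ (a a' : V ⊕ G.edgeSet) (b : V),
    b ∈ a.getLeft? → b ∈ a'.getLeft? → a = a' := by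
  rintro (a | a) (a' | a') b h h' <;> simp_all [Sum.getLeft?]

lemma core (hB : B ≤ subdivide G) : (Ag B).IsAcyclic ↔ B.IsAcyclic := by
  classical
  constructor
  · intro hA
    have key : ∀ (u : V) (c : B.Walk (Sum.inl u) (Sum.inl u)), ¬c.IsCycle := by
      intro u c hc
      obtain ⟨w', hl, hs, hch, hnd⟩ := proj_walk B hB c.length c rfl hc.isCircuit.isTrail
      apply hA w'
      refine ⟨⟨⟨hnd⟩, ?_⟩, ?_⟩
      · intro hnil
        have h3 := hc.three_le_length
        rw [hnil] at hl
        simp at hl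
        omega
      · have h1 : u :: w'.support.tail = u :: (c.support.tail.filterMap Sum.getLeft?) := by
          rw [← Walk.support_eq_cons w', hs, Walk.support_eq_cons c, List.filterMap_cons]
          rfl
        have h2 : w'.support.tail = c.support.tail.filterMap Sum.getLeft? :=
          (List.cons.injEq _ _ _ _ ▸ h1).2
        rw [h2]
        exact hc.support_nodup.filterMap getLeft?_pinj
    intro x c hc
    cases c with
    | nil => exact hc.ne_nil rfl
    | @cons _ y _ h₁ w₁ =>
      cases x with
      | inl u => exact key u (Walk.cons h₁ w₁) hc
      | inr e =>
        cases y with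
        | inr f => exact absurd (hB h₁) (subd_adj_inr_inr)
        | inl u =>
          have hu : Sum.inl u ∈ (Walk.cons h₁ w₁).support := by
            simp [Walk.support_cons]
          exact key u ((Walk.cons h₁ w₁).rotate _ hu) (hc.rotate hu)
  · intro hBa u c hc
    obtain ⟨c2, hlen, hsl, hsr, hch, hnd⟩ := lift_walk B c
    apply hBa c2
    refine ⟨⟨⟨hnd hc.isCircuit.isTrail.edges_nodup⟩, ?_⟩, ?_⟩
    · intro hnil
      have h3 := hc.three_le_length
      rw [hnil] at hlen
      simp only [Walk.length_nil] at hlen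
      omega
    · refine nodup_sum ?_ ?_
      · rw [hsl]; exact hc.support_nodup
      · exact List.Nodup.of_map _ (hsr ▸ hc.isCircuit.isTrail.edges_nodup)

end Stmt13Aux
/-- with `G - F` an `ℓ`-forest, the instance `(G, k, ℓ)` has a set `S`
of size at most `k` with `G - S` an `ℓ`-forest iff the subdivided graph `G'` has a set
`S'` of size at most `k` that is independent in `G'`, disjoint from the set `R` of
subdivision vertices, and with `G' - S'` an `ℓ`-forest. -/
theorem stmt_13 {V : Type*} [Fintype V] [DecidableEq V] (G : SimpleGraph V)
    (k ℓ : ℕ) (F : Finset V) (hF : IsLForest (G.induce ((↑F)ᶜ : Set V)) ℓ) :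
    (∃ S : Finset V, S.card ≤ k ∧ IsLForest (G.induce ((↑S)ᶜ : Set V)) ℓ) ↔
    (∃ S' : Finset (V ⊕ G.edgeSet), S'.card ≤ k ∧
      (∀ u ∈ S', ∀ v ∈ S', ¬ (subdivide G).Adj u v) ∧
      (∀ e : G.edgeSet, Sum.inr e ∉ S') ∧
      IsLForest ((subdivide G).induce ((↑S')ᶜ : Set (V ⊕ G.edgeSet))) ℓ) := by
  classical
  clear hF
  open Stmt13Aux in
  constructor
  · rintro ⟨S, hSk, hSf⟩
    rw [Stmt13Aux.isLForest_induce_iff] at hSf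
    obtain ⟨tb, htbe, htbc, htba⟩ := hSf
    set S' : Finset (V ⊕ G.edgeSet) := S.image Sum.inl with hS'
    set t' : Finset (Sym2 (V ⊕ G.edgeSet)) :=
      tb.attach.image (fun (q : {x // x ∈ tb}) =>
        s(Sum.inl (Quot.out q.1).1, Sum.inr (⟨q.1, htbe q.2⟩ : G.edgeSet))) with ht'
    have hmemS' : ∀ a : V, Sum.inl a ∈ S' ↔ a ∈ S := by
      intro a
      simp [hS', Sum.inl.injEq]
    refine ⟨S', le_trans Finset.card_image_le hSk, ?_, ?_, ?_⟩
    · intro u hu v hv hadj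
      simp only [hS', Finset.mem_image] at hu hv
      obtain ⟨a, -, rfl⟩ := hu
      obtain ⟨b, -, rfl⟩ := hv
      exact hadj
    · intro e
      simp [hS']
    · rw [Stmt13Aux.isLForest_induce_iff]
      refine ⟨t', ?_, ?_, ?_⟩
      · intro p hp
        simp only [ht', Finset.coe_image, Set.mem_image, Finset.mem_coe,
          Finset.mem_attach, true_and] at hp
        obtain ⟨q, -, rfl⟩ := hp
        exact (subdivide G).mem_edgeSet.2 (Sym2.out_fst_mem _)
      · refine le_trans Finset.card_image_le ?_
        rw [Finset.card_attach]
        exact htbc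
      · rw [← Stmt13Aux.core _ (Stmt13Aux.rg_le _ _ _)]
        have hkey : Stmt13Aux.Ag (Stmt13Aux.Rg (subdivide G) ((↑S' : Set (V ⊕ G.edgeSet))ᶜ) t')
            = Stmt13Aux.Rg G ((↑S : Set V)ᶜ) tb := by
          ext u v
          constructor
          · rintro ⟨e, he, ⟨ha1, hs1, -, hT1⟩, ⟨ha2, -, hs2, hT2⟩⟩
            have hGadj : G.Adj u v := by
              have := e.2; rw [he] at this; exact this
            refine ⟨hGadj, ?_, ?_, ?_⟩
            · simp only [Set.mem_compl_iff, Finset.mem_coe] at hs1 ⊢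
              exact fun h => hs1 ((hmemS' u).2 h)
            · simp only [Set.mem_compl_iff, Finset.mem_coe] at hs2 ⊢
              exact fun h => hs2 ((hmemS' v).2 h)
            · intro hmem
              have houtm : (s(u, v) : Sym2 V).out.1 ∈ (s(u, v) : Sym2 V) :=
                Sym2.out_fst_mem _
              have hee : (⟨s(u, v), htbe hmem⟩ : G.edgeSet) = e := Subtype.ext he.symm
              have hin : s(Sum.inl ((s(u, v) : Sym2 V).out.1), Sum.inr e) ∈ t' := by
                rw [← hee, ht']
                exact Finset.mem_image_of_mem _ (Finset.mem_attach tb ⟨s(u, v), hmem⟩)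
              rw [Sym2.mem_iff] at houtm
              rcases houtm with h | h
              · rw [h] at hin
                exact hT1 hin
              · rw [h] at hin
                rw [Sym2.eq_swap] at hin
                exact hT2 hin
          · rintro ⟨hGadj, hu, hv, ht⟩
            refine ⟨⟨s(u, v), (G.mem_edgeSet).2 hGadj⟩, rfl, ?_, ?_⟩
            · refine ⟨?_, ?_, ?_, ?_⟩
              · show u ∈ (s(u, v) : Sym2 V)
                exact Sym2.mem_mk_left u v
              · simp only [Set.mem_compl_iff, Finset.mem_coe, hmemS']
                simpa using hu
              · simp [hS']
              · intro hmem
                simp only [ht', Finset.mem_image, Finset.mem_attach, true_and] at hmem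
                obtain ⟨q, hq⟩ := hmem
                rw [Sym2.eq_iff] at hq
                rcases hq with ⟨h1, h2⟩ | ⟨h1, h2⟩
                · have : (q : Sym2 V) = s(u, v) := congrArg Subtype.val (Sum.inr.inj h2)
                  apply ht
                  rw [← this]
                  exact q.2
                · exact absurd h1 (by simp)
            · refine ⟨?_, ?_, ?_, ?_⟩
              · show v ∈ (s(u, v) : Sym2 V)
                exact Sym2.mem_mk_right u v
              · simp [hS']
              · simp only [Set.mem_compl_iff, Finset.mem_coe, hmemS']
                simpa using hv
              · intro hmem
                rw [Sym2.eq_swap] at hmem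
                simp only [ht', Finset.mem_image, Finset.mem_attach, true_and] at hmem
                obtain ⟨q, hq⟩ := hmem
                rw [Sym2.eq_iff] at hq
                rcases hq with ⟨h1, h2⟩ | ⟨h1, h2⟩
                · have : (q : Sym2 V) = s(u, v) := congrArg Subtype.val (Sum.inr.inj h2)
                  apply ht
                  rw [← this]
                  exact q.2
                · exact absurd h1 (by simp)
        rw [hkey]
        exact htba
  · rintro ⟨S', hS'k, hind, hR, hS'f⟩
    rw [Stmt13Aux.isLForest_induce_iff] at hS'f
    obtain ⟨t', ht'e, ht'c, ht'a⟩ := hS'f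
    set S : Finset V := S'.preimage Sum.inl (Sum.inl_injective.injOn) with hS
    have hmemS : ∀ a : V, a ∈ S ↔ Sum.inl a ∈ S' := by
      intro a; simp [hS, Finset.mem_preimage]
    set tf : Finset G.edgeSet := (Finset.univ : Finset G.edgeSet).filter
      (fun e => ∃ a, a ∈ (e : Sym2 V) ∧ s(Sum.inl a, Sum.inr e) ∈ t') with htf
    set tb : Finset (Sym2 V) := tf.image Subtype.val with htb
    refine ⟨S, ?_, ?_⟩
    · refine le_trans (Finset.card_le_card_of_injOn Sum.inl
        (fun a ha => (hmemS a).1 ha) (Sum.inl_injective.injOn)) hS'k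
    · rw [Stmt13Aux.isLForest_induce_iff]
      refine ⟨tb, ?_, ?_, ?_⟩
      · intro p hp
        simp only [htb, Finset.coe_image, Set.mem_image, Finset.mem_coe] at hp
        obtain ⟨e, -, rfl⟩ := hp
        exact e.2
      · refine le_trans Finset.card_image_le (le_trans ?_ ht'c)
        refine Finset.card_le_card_of_injOn
          (fun e => if h : ∃ a, a ∈ (e : Sym2 V) ∧ s(Sum.inl a, Sum.inr e) ∈ t' then
            s(Sum.inl h.choose, Sum.inr e) else s(Sum.inr e, Sum.inr e)) ?_ ?_
        · intro e he
          simp only [htf, Finset.mem_coe, Finset.mem_filter, Finset.mem_univ, true_and] at he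
          dsimp only
          rw [dif_pos he]
          exact he.choose_spec.2
        · intro e he e' he' heq
          simp only [htf, Finset.coe_filter, Set.mem_setOf_eq, Finset.mem_univ,
            true_and] at he he'
          dsimp only at heq
          rw [dif_pos he, dif_pos he'] at heq
          rw [Sym2.eq_iff] at heq
          rcases heq with ⟨-, h2⟩ | ⟨h1, -⟩
          · exact Sum.inr.inj h2
          · exact absurd h1 (by simp)
      · have hkey : Stmt13Aux.Ag (Stmt13Aux.Rg (subdivide G) ((↑S' : Set (V ⊕ G.edgeSet))ᶜ) t')
            = Stmt13Aux.Rg G ((↑S : Set V)ᶜ) tb := by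
          ext u v
          constructor
          · rintro ⟨e, he, ⟨ha1, hs1, -, hT1⟩, ⟨ha2, -, hs2, hT2⟩⟩
            have hGadj : G.Adj u v := by
              have := e.2; rw [he] at this; exact this
            refine ⟨hGadj, ?_, ?_, ?_⟩
            · simp only [Set.mem_compl_iff, Finset.mem_coe] at hs1 ⊢
              exact fun h => hs1 ((hmemS u).1 h)
            · simp only [Set.mem_compl_iff, Finset.mem_coe] at hs2 ⊢
              exact fun h => hs2 ((hmemS v).1 h)
            · intro hmem
              simp only [htb, Finset.mem_image] at hmem
              obtain ⟨e', he'f, he'v⟩ := hmem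
              have hee : e' = e := Subtype.ext (by rw [he'v, he])
              subst hee
              simp only [htf, Finset.mem_filter, Finset.mem_univ, true_and] at he'f
              obtain ⟨a, ham, hat⟩ := he'f
              rw [he, Sym2.mem_iff] at ham
              rcases ham with rfl | rfl
              · exact hT1 hat
              · rw [Sym2.eq_swap] at hat
                exact hT2 hat
          · rintro ⟨hGadj, hu, hv, ht⟩
            have henot : ∀ a, a ∈ (s(u, v) : Sym2 V) →
                s(Sum.inl a, Sum.inr (⟨s(u, v), (G.mem_edgeSet).2 hGadj⟩ : G.edgeSet)) ∉ t' := by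
              intro a ham hat
              apply ht
              simp only [htb, Finset.mem_image]
              refine ⟨⟨s(u, v), (G.mem_edgeSet).2 hGadj⟩, ?_, rfl⟩
              simp only [htf, Finset.mem_filter, Finset.mem_univ, true_and]
              exact ⟨a, ham, hat⟩
            refine ⟨⟨s(u, v), (G.mem_edgeSet).2 hGadj⟩, rfl, ?_, ?_⟩
            · refine ⟨?_, ?_, ?_, ?_⟩
              · show u ∈ (s(u, v) : Sym2 V)
                exact Sym2.mem_mk_left u v
              · simp only [Set.mem_compl_iff, Finset.mem_coe, ← hmemS]
                simpa using hu
              · simp only [Set.mem_compl_iff, Finset.mem_coe]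
                exact hR _
              · exact henot u (Sym2.mem_mk_left u v)
            · refine ⟨?_, ?_, ?_, ?_⟩
              · show v ∈ (s(u, v) : Sym2 V)
                exact Sym2.mem_mk_right u v
              · simp only [Set.mem_compl_iff, Finset.mem_coe]
                exact hR _
              · simp only [Set.mem_compl_iff, Finset.mem_coe, ← hmemS]
                simpa using hv
              · rw [Sym2.eq_swap]
                exact henot v (Sym2.mem_mk_right u v)
        rw [← hkey, Stmt13Aux.core _ (Stmt13Aux.rg_le (subdivide G) ((↑S' : Set (V ⊕ G.edgeSet))ᶜ) t')]
        exact ht'a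
end
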